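/- arXiv:2402.02673 — 6 statements merged into one kernel-verified Lean document; each statement's English description precedes it below -/
import Mathlib

section
/- For every t ≥ 2, the t-stage (ℓ_max, Borda)-rule (the Chamberlin–Courant rule, with position scores Borda^{m,k}(p) = m − p and committee score f_v(S) = max_{c∈S}(m − p_v(c)), applied at every stage) does not satisfy Consistency. -/
/-- Position (1-indexed) of candidate `c` in voter `v`'s induced ranking on the
pool `C` (voters are ranking functions, smaller value = more preferred). -/
def posIn {α : Type} (v : α → ℕ) (C : Finset α) (c : α) : ℕ :=
  (C.filter fun c' => v c' ≤ v c).card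

/-- Every voter of `V` has a strict (injective) preference on the candidate set `C`. -/
def StrictPrefs {α : Type} (C : Finset α) (V : List (α → ℕ)) : Prop :=
  ∀ v ∈ V, Set.InjOn v ↑C

/-- The two norms parameterizing score-based rules. -/
inductive ScoreNorm : Type
  | l1
  | lmax

/-- Voter `v`'s score for a committee `S` on the pool `C` with target size `k`,
under the `(β, γ)`-rule (`γ m k p` is the position score of position `p` for
`m` candidates and target size `k`). -/
noncomputable def voterScore {α : Type} (β : ScoreNorm) (γ : ℕ → ℕ → ℕ → ℝ)
    (C : Finset α) (k : ℕ) (v : α → ℕ) (S : Finset α) : ℝ :=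
  match β with
  | .l1 => ∑ c ∈ S, γ C.card k (posIn v C c)
  | .lmax => sSup ((fun c => γ C.card k (posIn v C c)) '' (S : Set α))

/-- Total score `Σ_{v ∈ V} f_v(S)` of a committee. -/
noncomputable def totalScore {α : Type} (β : ScoreNorm) (γ : ℕ → ℕ → ℕ → ℝ)
    (C : Finset α) (V : List (α → ℕ)) (k : ℕ) (S : Finset α) : ℝ :=
  (V.map fun v => voterScore β γ C k v S).sum

/-- Winning committees of the single-stage `(β, γ)`-rule: the size-`k` committees
maximizing the total score. -/
def scoreWinners {α : Type} (β : ScoreNorm) (γ : ℕ → ℕ → ℕ → ℝ)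
    (C : Finset α) (V : List (α → ℕ)) (k : ℕ) : Set (Finset α) :=
  {S | S ⊆ C ∧ S.card = k ∧
    ∀ T ⊆ C, T.card = k → totalScore β γ C V k T ≤ totalScore β γ C V k S}

/-- Winning committees of the multi-stage `(β, γ)`-rule for stage vector `ks`:
the winning committee of each stage is the candidate pool of the next stage. -/
def msWinners {α : Type} (β : ScoreNorm) (γ : ℕ → ℕ → ℕ → ℝ) :
    List ℕ → Finset α → List (α → ℕ) → Set (Finset α)
  | [], C, _ => {C}
  | k :: ks, C, V => {S | ∃ S₁ ∈ scoreWinners β γ C V k, S ∈ msWinners β γ ks S₁ V}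

/-- Each `γ^{m,k}` is non-increasing on the positions `1, …, m`. -/
def GammaMono (γ : ℕ → ℕ → ℕ → ℝ) : Prop :=
  ∀ m k p q : ℕ, 1 ≤ p → p ≤ q → q ≤ m → γ m k q ≤ γ m k p

/-- Rationality of a `(β, γ)`-rule: for every pair `(m, k)` with `m > k ≥ 1`,
`γ^{m,k}(1) > γ^{m,k}(m)` when `β = ℓ₁`, and `γ^{m,k}(1) > γ^{m,k}(m-k+1)` when
`β = ℓ_max`. -/
def RationalRule : ScoreNorm → (ℕ → ℕ → ℕ → ℝ) → Prop
  | .l1, γ => ∀ m k : ℕ, 1 ≤ k → k < m → γ m k m < γ m k 1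
  | .lmax, γ => ∀ m k : ℕ, 1 ≤ k → k < m → γ m k (m - k + 1) < γ m k 1

/-- A valid stage vector for the candidate set `C`: `|C| > k_1 > … > k_t ≥ 1`. -/
def ValidVec {α : Type} (C : Finset α) (ks : List ℕ) : Prop :=
  List.Chain (· > ·) C.card ks ∧ ∀ k ∈ ks, 1 ≤ k

/-- Consistency for the `t`-stage `(β, γ)`-rule: whenever two voter lists over
the same candidate set have a common winning committee, the winning committees
of the combined electorate are exactly the common winning committees. -/
def MSConsistent (β : ScoreNorm) (γ : ℕ → ℕ → ℕ → ℝ) (t : ℕ) : Prop :=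
  ∀ (α : Type) (C : Finset α) (V₁ V₂ : List (α → ℕ)),
    StrictPrefs C V₁ → StrictPrefs C V₂ →
    ∀ (ks : List ℕ), ks ≠ [] → ks.length = t → ValidVec C ks →
    (msWinners β γ ks C V₁ ∩ msWinners β γ ks C V₂).Nonempty →
    msWinners β γ ks C (V₁ ++ V₂) = msWinners β γ ks C V₁ ∩ msWinners β γ ks C V₂

namespace MSCC

def bordaγ : ℕ → ℕ → ℕ → ℝ := fun m _ p => (m : ℝ) - (p : ℝ)

def descList : ℕ → List ℕ
  | 0 => []
  | n+1 => (n+1) :: descList n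

def perm3 (p q r : ℕ) : ℕ → ℕ := fun n =>
  if n = 0 then p else if n = 1 then q else if n = 2 then r else n

def Perm3 (v : ℕ → ℕ) : Prop :=
  v 0 < 3 ∧ v 1 < 3 ∧ v 2 < 3 ∧ v 0 ≠ v 1 ∧ v 0 ≠ v 2 ∧ v 1 ≠ v 2 ∧ ∀ x, 3 ≤ x → v x = x

lemma perm3_Perm3 {p q r : ℕ} (hp : p < 3) (hq : q < 3) (hr : r < 3)
    (h1 : p ≠ q) (h2 : p ≠ r) (h3 : q ≠ r) : Perm3 (perm3 p q r) := by
  refine ⟨by simpa [perm3] using hp, by simpa [perm3] using hq, by simpa [perm3] using hr,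
    by simpa [perm3] using h1, by simpa [perm3] using h2, by simpa [perm3] using h3, ?_⟩
  intro x hx
  simp only [perm3]
  split
  · omega
  split
  · omega
  split
  · omega
  · rfl

lemma perm3_inj {v : ℕ → ℕ} (hv : Perm3 v) : Function.Injective v := by
  obtain ⟨h0, h1, h2, h01, h02, h12, hbig⟩ := hv
  intro x y hxy
  rcases lt_or_ge x 3 with hx | hx <;> rcases lt_or_ge y 3 with hy | hy
  · interval_cases x <;> interval_cases y <;> omega
  · have := hbig y hy; interval_cases x <;> omega
  · have := hbig x hx; interval_cases y <;> omega
  · rw [hbig x hx, hbig y hy] at hxy; exact hxy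

lemma exists_top {v : ℕ → ℕ} (hv : Perm3 v) : ∃ c, c < 3 ∧ v c = 0 := by
  obtain ⟨h0, h1, h2, h01, h02, h12, _⟩ := hv
  by_cases e0 : v 0 = 0
  · exact ⟨0, by omega, e0⟩
  by_cases e1 : v 1 = 0
  · exact ⟨1, by omega, e1⟩
  · exact ⟨2, by omega, by omega⟩

lemma posIn_pos {v : ℕ → ℕ} {P : Finset ℕ} {c : ℕ} (hc : c ∈ P) : 1 ≤ posIn v P c := by
  exact Finset.card_pos.mpr ⟨c, Finset.mem_filter.2 ⟨hc, le_refl _⟩⟩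

lemma posIn_small {v : ℕ → ℕ} {P : Finset ℕ} (hP : ({0,1,2} : Finset ℕ) ⊆ P)
    (hv : Perm3 v) {x : ℕ} (hx : x < 3) : posIn v P x = v x + 1 := by
  obtain ⟨h0, h1, h2, h01, h02, h12, hbig⟩ := hv
  have hvx : v x < 3 := by interval_cases x <;> assumption
  have hfil : P.filter (fun y => v y ≤ v x) =
      ({0,1,2} : Finset ℕ).filter (fun y => v y ≤ v x) := by
    ext y
    simp only [Finset.mem_filter, Finset.mem_insert, Finset.mem_singleton]
    constructor
    · rintro ⟨hyP, hle⟩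
      refine ⟨?_, hle⟩
      by_contra hy
      have hy3 : 3 ≤ y := by omega
      rw [hbig y hy3] at hle; omega
    · rintro ⟨hy, hle⟩
      exact ⟨hP (by simp [hy]), hle⟩
  rw [posIn, hfil]
  have h6 : (v 0 = 0 ∧ v 1 = 1 ∧ v 2 = 2) ∨ (v 0 = 0 ∧ v 1 = 2 ∧ v 2 = 1) ∨
      (v 0 = 1 ∧ v 1 = 0 ∧ v 2 = 2) ∨ (v 0 = 1 ∧ v 1 = 2 ∧ v 2 = 0) ∨
      (v 0 = 2 ∧ v 1 = 0 ∧ v 2 = 1) ∨ (v 0 = 2 ∧ v 1 = 1 ∧ v 2 = 0) := by omega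
  rcases h6 with ⟨e0,e1,e2⟩|⟨e0,e1,e2⟩|⟨e0,e1,e2⟩|⟨e0,e1,e2⟩|⟨e0,e1,e2⟩|⟨e0,e1,e2⟩ <;>
    interval_cases x <;>
    simp [Finset.filter_insert, Finset.filter_singleton, e0, e1, e2]

lemma posIn_big {v : ℕ → ℕ} {P : Finset ℕ} (hP : ({0,1,2} : Finset ℕ) ⊆ P)
    (hv : Perm3 v) {c : ℕ} (hc : c ∈ P) (h3 : 3 ≤ c) : 2 ≤ posIn v P c := by
  obtain ⟨c₀, hc₀3, hvc₀⟩ := exists_top hv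
  have hc₀P : c₀ ∈ P := hP (by simp; omega)
  have hvc3 : v c = c := hv.2.2.2.2.2.2 c h3
  rw [posIn]
  refine Finset.one_lt_card.2 ⟨c₀, ?_, c, ?_, by omega⟩
  · exact Finset.mem_filter.2 ⟨hc₀P, by omega⟩
  · exact Finset.mem_filter.2 ⟨hc, le_refl _⟩


lemma voterScore_lmax_eq_sup' {α : Type} (γ : ℕ → ℕ → ℕ → ℝ) (C : Finset α) (k : ℕ)
    (v : α → ℕ) {S : Finset α} (hS : S.Nonempty) :
    voterScore .lmax γ C k v S = S.sup' hS (fun c => γ C.card k (posIn v C c)) := by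
  rw [voterScore, Finset.sup'_eq_csSup_image]

lemma voterScore_pair {α : Type} [DecidableEq α] (γ : ℕ → ℕ → ℕ → ℝ) (C : Finset α) (k : ℕ)
    (v : α → ℕ) (x y : α) :
    voterScore .lmax γ C k v {x, y} =
      max (γ C.card k (posIn v C x)) (γ C.card k (posIn v C y)) := by
  rw [voterScore]
  simp only [Finset.coe_insert, Finset.coe_singleton, Set.image_pair, csSup_pair]

lemma voterScore_single {α : Type} (γ : ℕ → ℕ → ℕ → ℝ) (C : Finset α) (k : ℕ)
    (v : α → ℕ) (x : α) :
    voterScore .lmax γ C k v {x} = γ C.card k (posIn v C x) := by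
  rw [voterScore]
  simp only [Finset.coe_singleton, Set.image_singleton, csSup_singleton]

lemma voterScore_le {v : ℕ → ℕ} {P S : Finset ℕ} (hS : S.Nonempty) (hsub : S ⊆ P) (k : ℕ) :
    voterScore .lmax bordaγ P k v S ≤ (P.card : ℝ) - 1 := by
  rw [voterScore_lmax_eq_sup' _ _ _ _ hS]
  refine Finset.sup'_le _ _ fun c hc => ?_
  have h1 : 1 ≤ posIn v P c := posIn_pos (hsub hc)
  simp only [bordaγ]
  have : (1 : ℝ) ≤ (posIn v P c : ℕ) := by exact_mod_cast h1
  linarith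

lemma voterScore_top {v : ℕ → ℕ} {P S : Finset ℕ} (hP : ({0,1,2} : Finset ℕ) ⊆ P)
    (hv : Perm3 v) (hsub : S ⊆ P) {c : ℕ} (hc : c ∈ S) (hc3 : c < 3) (hvc : v c = 0)
    (k : ℕ) : voterScore .lmax bordaγ P k v S = (P.card : ℝ) - 1 := by
  have hS : S.Nonempty := ⟨c, hc⟩
  refine le_antisymm (voterScore_le hS hsub k) ?_
  rw [voterScore_lmax_eq_sup' _ _ _ _ hS]
  have := Finset.le_sup' (fun c => bordaγ P.card k (posIn v P c)) hc
  refine le_trans (le_of_eq ?_) this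
  rw [posIn_small hP hv hc3, hvc]
  simp [bordaγ]

lemma voterScore_bad {v : ℕ → ℕ} {P S : Finset ℕ} (hS : S.Nonempty) (hsub : S ⊆ P)
    (hall : ∀ c ∈ S, 2 ≤ posIn v P c) (k : ℕ) :
    voterScore .lmax bordaγ P k v S ≤ (P.card : ℝ) - 2 := by
  rw [voterScore_lmax_eq_sup' _ _ _ _ hS]
  refine Finset.sup'_le _ _ fun c hc => ?_
  have h2 : 2 ≤ posIn v P c := hall c hc
  simp only [bordaγ]
  have : (2 : ℝ) ≤ (posIn v P c : ℕ) := by exact_mod_cast h2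
  linarith

lemma totalScore_le {P S : Finset ℕ} {V : List (ℕ → ℕ)} (hS : S.Nonempty) (hsub : S ⊆ P)
    (k : ℕ) : totalScore .lmax bordaγ P V k S ≤ (V.length : ℝ) * ((P.card : ℝ) - 1) := by
  rw [totalScore]
  have := List.sum_le_card_nsmul (V.map fun v => voterScore .lmax bordaγ P k v S)
    ((P.card : ℝ) - 1) ?_
  · simpa [nsmul_eq_mul] using this
  · intro x hx
    obtain ⟨v, _, rfl⟩ := List.mem_map.1 hx
    exact voterScore_le hS hsub k

lemma totalScore_le_sub_one {P S : Finset ℕ} {V : List (ℕ → ℕ)} {v : ℕ → ℕ} (hv : v ∈ V)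
    (hS : S.Nonempty) (hsub : S ⊆ P) (k : ℕ)
    (hbad : voterScore .lmax bordaγ P k v S ≤ (P.card : ℝ) - 2) :
    totalScore .lmax bordaγ P V k S ≤ (V.length : ℝ) * ((P.card : ℝ) - 1) - 1 := by
  rw [totalScore]
  induction V with
  | nil => simp at hv
  | cons u l ih =>
    simp only [List.map_cons, List.sum_cons, List.length_cons]
    rcases List.mem_cons.1 hv with rfl | hvl
    · have hrest : (l.map fun w => voterScore .lmax bordaγ P k w S).sum ≤
          (l.length : ℝ) * ((P.card : ℝ) - 1) := by
        have := List.sum_le_card_nsmul (l.map fun w => voterScore .lmax bordaγ P k w S)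
          ((P.card : ℝ) - 1) ?_
        · simpa [nsmul_eq_mul] using this
        · intro x hx
          obtain ⟨w, _, rfl⟩ := List.mem_map.1 hx
          exact voterScore_le hS hsub k
      push_cast
      nlinarith [hbad, hrest]
    · have := ih hvl
      have hu : voterScore .lmax bordaγ P k u S ≤ (P.card : ℝ) - 1 :=
        voterScore_le hS hsub k
      push_cast
      push_cast at this
      linarith

lemma totalScore_erase_dummy {P : Finset ℕ} {V : List (ℕ → ℕ)}
    (hP : ({0,1,2} : Finset ℕ) ⊆ P) (hV : ∀ v ∈ V, Perm3 v) {d : ℕ} (h3 : 3 ≤ d)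
    (k : ℕ) :
    totalScore .lmax bordaγ P V k (P.erase d) = (V.length : ℝ) * ((P.card : ℝ) - 1) := by
  rw [totalScore]
  have hmap : (V.map fun v => voterScore .lmax bordaγ P k v (P.erase d)) =
      V.map fun _ => ((P.card : ℝ) - 1) := by
    refine List.map_congr_left fun v hvV => ?_
    obtain ⟨c, hc3, hvc⟩ := exists_top (hV v hvV)
    have hcP : c ∈ P := hP (by simp; omega)
    have hcS : c ∈ P.erase d := Finset.mem_erase.2 ⟨by omega, hcP⟩
    exact voterScore_top hP (hV v hvV) (Finset.erase_subset _ _) hcS hc3 hvc k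
  rw [hmap, List.map_const', List.sum_replicate, nsmul_eq_mul]

lemma mem_msWinners_cons {α : Type} (β : ScoreNorm) (γ : ℕ → ℕ → ℕ → ℝ) (k : ℕ)
    (ks : List ℕ) (C : Finset α) (V : List (α → ℕ)) (S : Finset α) :
    S ∈ msWinners β γ (k :: ks) C V ↔
      ∃ S₁ ∈ scoreWinners β γ C V k, S ∈ msWinners β γ ks S₁ V := Iff.rfl

lemma subset_card_pred {P T : Finset ℕ} (hsub : T ⊆ P) (hcard : T.card = P.card - 1)
    (hpos : 1 ≤ P.card) : ∃ x ∈ P, T = P.erase x := by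
  have hsd : (P \ T).card = 1 := by
    rw [Finset.card_sdiff_of_subset hsub]; omega
  obtain ⟨x, hx⟩ := Finset.card_eq_one.1 hsd
  have hxP : x ∈ P := by
    have : x ∈ P \ T := hx ▸ Finset.mem_singleton_self x
    exact (Finset.mem_sdiff.1 this).1
  refine ⟨x, hxP, ?_⟩
  have : P \ (P \ T) = T := Finset.sdiff_sdiff_eq_self hsub
  rw [hx] at this
  rw [← this, Finset.erase_eq]

lemma exists_dummy {P : Finset ℕ} (hP : ({0,1,2} : Finset ℕ) ⊆ P) (hcard : 4 ≤ P.card) :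
    ∃ d ∈ P, 3 ≤ d := by
  have hex : ∃ d ∈ P, d ∉ ({0,1,2} : Finset ℕ) := by
    by_contra h
    push_neg at h
    have hsub : P ⊆ ({0,1,2} : Finset ℕ) := fun y hy => h y hy
    have := Finset.card_le_card hsub
    have h3 : ({0,1,2} : Finset ℕ).card = 3 := by decide
    omega
  obtain ⟨d, hdP, hd⟩ := hex
  refine ⟨d, hdP, ?_⟩
  simp only [Finset.mem_insert, Finset.mem_singleton] at hd
  omega

lemma erase_dummy_winner {P : Finset ℕ} {V : List (ℕ → ℕ)}
    (hP : ({0,1,2} : Finset ℕ) ⊆ P) (hV : ∀ v ∈ V, Perm3 v) (hcard : 4 ≤ P.card)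
    {d : ℕ} (hdP : d ∈ P) (h3 : 3 ≤ d) :
    P.erase d ∈ scoreWinners .lmax bordaγ P V (P.card - 1) := by
  refine ⟨Finset.erase_subset _ _, by rw [Finset.card_erase_of_mem hdP], ?_⟩
  intro T hT hTcard
  rw [totalScore_erase_dummy hP hV h3]
  have hTne : T.Nonempty := by
    rw [← Finset.card_pos, hTcard]; omega
  exact totalScore_le hTne hT _

lemma winners_char {P : Finset ℕ} {V : List (ℕ → ℕ)}
    (hP : ({0,1,2} : Finset ℕ) ⊆ P) (hV : ∀ v ∈ V, Perm3 v)
    (htops : ∀ x, x < 3 → ∃ v ∈ V, v x = 0) (hcard : 4 ≤ P.card)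
    {W : Finset ℕ} (hW : W ∈ scoreWinners .lmax bordaγ P V (P.card - 1)) :
    ∃ d ∈ P, 3 ≤ d ∧ W = P.erase d := by
  obtain ⟨hWsub, hWcard, hWmax⟩ := hW
  obtain ⟨x, hxP, rfl⟩ := subset_card_pred hWsub hWcard (by omega)
  rcases le_or_gt 3 x with h3 | h3
  · exact ⟨x, hxP, h3, rfl⟩
  · exfalso
    obtain ⟨d, hdP, hd3⟩ := exists_dummy hP hcard
    obtain ⟨v, hvV, hvx⟩ := htops x h3
    have hne : (P.erase x).Nonempty := by
      rw [← Finset.card_pos, Finset.card_erase_of_mem hxP]; omega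
    have hbad : voterScore .lmax bordaγ P (P.card - 1) v (P.erase x) ≤ (P.card : ℝ) - 2 := by
      refine voterScore_bad hne (Finset.erase_subset _ _) (fun c hc => ?_) _
      obtain ⟨hcx, hcP⟩ := Finset.mem_erase.1 hc
      rcases le_or_gt 3 c with hc3 | hc3
      · exact posIn_big hP (hV v hvV) hcP hc3
      · rw [posIn_small hP (hV v hvV) hc3]
        have hinj := perm3_inj (hV v hvV)
        have : v c ≠ 0 := fun h => hcx (hinj (h.trans hvx.symm))
        omega
    have hle := totalScore_le_sub_one hvV hne (Finset.erase_subset _ _) (P.card - 1) hbad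
    have hmax := hWmax (P.erase d) (Finset.erase_subset _ _)
      (by rw [Finset.card_erase_of_mem hdP])
    rw [totalScore_erase_dummy hP hV hd3] at hmax
    linarith

lemma L {V : List (ℕ → ℕ)} (hV : ∀ v ∈ V, Perm3 v)
    (htops : ∀ x, x < 3 → ∃ v ∈ V, v x = 0) :
    ∀ n (P : Finset ℕ), ({0,1,2} : Finset ℕ) ⊆ P → P.card = n + 3 →
      msWinners .lmax bordaγ (descList (n+2)) P V =
        msWinners .lmax bordaγ (descList 2) ({0,1,2} : Finset ℕ) V := by
  intro n
  induction n with
  | zero =>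
    intro P hsub hcard
    have : ({0,1,2} : Finset ℕ) = P := by
      refine Finset.eq_of_subset_of_card_le hsub ?_
      rw [hcard]; decide
    rw [this]
  | succ n ih =>
    intro P hsub hcard
    have hcard4 : 4 ≤ P.card := by omega
    have hk : n + 3 = P.card - 1 := by omega
    show msWinners .lmax bordaγ ((n+3) :: descList (n+2)) P V = _
    ext S
    rw [mem_msWinners_cons]
    constructor
    · rintro ⟨S₁, hS₁, hS⟩
      rw [hk] at hS₁
      obtain ⟨d, hdP, hd3, rfl⟩ := winners_char hsub hV htops hcard4 hS₁
      have hsub' : ({0,1,2} : Finset ℕ) ⊆ P.erase d := by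
        intro y hy
        simp only [Finset.mem_insert, Finset.mem_singleton] at hy
        exact Finset.mem_erase.2 ⟨by omega, hsub (by simp [hy])⟩
      have hcard' : (P.erase d).card = n + 3 := by
        rw [Finset.card_erase_of_mem hdP]; omega
      rw [← ih (P.erase d) hsub' hcard']
      exact hS
    · intro hS
      obtain ⟨d, hdP, hd3⟩ := exists_dummy hsub hcard4
      have hsub' : ({0,1,2} : Finset ℕ) ⊆ P.erase d := by
        intro y hy
        simp only [Finset.mem_insert, Finset.mem_singleton] at hy
        exact Finset.mem_erase.2 ⟨by omega, hsub (by simp [hy])⟩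
      have hcard' : (P.erase d).card = n + 3 := by
        rw [Finset.card_erase_of_mem hdP]; omega
      refine ⟨P.erase d, ?_, ?_⟩
      · rw [hk]; exact erase_dummy_winner hsub hV hcard4 hdP hd3
      · rw [ih (P.erase d) hsub' hcard']; exact hS

def V1 : List (ℕ → ℕ) := [perm3 0 1 2, perm3 1 0 2, perm3 2 0 1, perm3 1 2 0]
def V2 : List (ℕ → ℕ) := [perm3 0 2 1, perm3 1 2 0, perm3 2 1 0, perm3 1 0 2]

lemma hV1 : ∀ v ∈ V1, Perm3 v := by
  intro v hv
  simp only [V1, List.mem_cons, List.not_mem_nil, or_false] at hv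
  rcases hv with rfl|rfl|rfl|rfl <;> apply perm3_Perm3 <;> omega

lemma hV2 : ∀ v ∈ V2, Perm3 v := by
  intro v hv
  simp only [V2, List.mem_cons, List.not_mem_nil, or_false] at hv
  rcases hv with rfl|rfl|rfl|rfl <;> apply perm3_Perm3 <;> omega

lemma hV12 : ∀ v ∈ V1 ++ V2, Perm3 v := by
  intro v hv
  rcases List.mem_append.1 hv with h | h
  · exact hV1 v h
  · exact hV2 v h

lemma htops1 : ∀ x, x < 3 → ∃ v ∈ V1, v x = 0 := by
  intro x hx
  interval_cases x
  · exact ⟨perm3 0 1 2, by simp [V1], by decide⟩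
  · exact ⟨perm3 1 0 2, by simp [V1], by decide⟩
  · exact ⟨perm3 1 2 0, by simp [V1], by decide⟩

lemma htops2 : ∀ x, x < 3 → ∃ v ∈ V2, v x = 0 := by
  intro x hx
  interval_cases x
  · exact ⟨perm3 0 2 1, by simp [V2], by decide⟩
  · exact ⟨perm3 1 0 2, by simp [V2], by decide⟩
  · exact ⟨perm3 1 2 0, by simp [V2], by decide⟩

lemma htops12 : ∀ x, x < 3 → ∃ v ∈ V1 ++ V2, v x = 0 := by
  intro x hx
  obtain ⟨v, hv, hvx⟩ := htops1 x hx
  exact ⟨v, List.mem_append_left _ hv, hvx⟩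

lemma pair_cases {T : Finset ℕ} (hsub : T ⊆ ({0,1,2} : Finset ℕ)) (hcard : T.card = 2) :
    T = {0,1} ∨ T = {0,2} ∨ T = {1,2} := by
  obtain ⟨x, y, hxy, rfl⟩ := Finset.card_eq_two.1 hcard
  have hx := hsub (Finset.mem_insert_self x {y})
  have hy := hsub (Finset.mem_insert_of_mem (Finset.mem_singleton_self y))
  simp only [Finset.mem_insert, Finset.mem_singleton] at hx hy
  rcases hx with rfl|rfl|rfl <;> rcases hy with rfl|rfl|rfl <;>
    first | (exact absurd rfl hxy) | decide

lemma single_cases {a b : ℕ} {T : Finset ℕ} (hsub : T ⊆ ({a, b} : Finset ℕ))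
    (hcard : T.card = 1) : T = {a} ∨ T = {b} := by
  obtain ⟨x, rfl⟩ := Finset.card_eq_one.1 hcard
  have hx := hsub (Finset.mem_singleton_self x)
  simp only [Finset.mem_insert, Finset.mem_singleton] at hx
  rcases hx with rfl|rfl
  · exact Or.inl rfl
  · exact Or.inr rfl

set_option maxHeartbeats 1000000 in
lemma tsV1_01 : totalScore .lmax bordaγ ({0,1,2} : Finset ℕ) V1 2 {0,1} = 7 := by
  rw [totalScore]
  simp only [V1, V2, List.map_append, List.map_cons, List.map_nil, List.sum_append,
    List.sum_cons, List.sum_nil, voterScore_pair]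
  norm_num [bordaγ, max_def, posIn, perm3, Finset.filter_insert, Finset.filter_singleton]

set_option maxHeartbeats 1000000 in
lemma tsV1_02 : totalScore .lmax bordaγ ({0,1,2} : Finset ℕ) V1 2 {0,2} = 6 := by
  rw [totalScore]
  simp only [V1, V2, List.map_append, List.map_cons, List.map_nil, List.sum_append,
    List.sum_cons, List.sum_nil, voterScore_pair]
  norm_num [bordaγ, max_def, posIn, perm3, Finset.filter_insert, Finset.filter_singleton]

set_option maxHeartbeats 1000000 in
lemma tsV1_12 : totalScore .lmax bordaγ ({0,1,2} : Finset ℕ) V1 2 {1,2} = 7 := by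
  rw [totalScore]
  simp only [V1, V2, List.map_append, List.map_cons, List.map_nil, List.sum_append,
    List.sum_cons, List.sum_nil, voterScore_pair]
  norm_num [bordaγ, max_def, posIn, perm3, Finset.filter_insert, Finset.filter_singleton]

set_option maxHeartbeats 1000000 in
lemma tsV2_01 : totalScore .lmax bordaγ ({0,1,2} : Finset ℕ) V2 2 {0,1} = 6 := by
  rw [totalScore]
  simp only [V1, V2, List.map_append, List.map_cons, List.map_nil, List.sum_append,
    List.sum_cons, List.sum_nil, voterScore_pair]
  norm_num [bordaγ, max_def, posIn, perm3, Finset.filter_insert, Finset.filter_singleton]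

set_option maxHeartbeats 1000000 in
lemma tsV2_02 : totalScore .lmax bordaγ ({0,1,2} : Finset ℕ) V2 2 {0,2} = 7 := by
  rw [totalScore]
  simp only [V1, V2, List.map_append, List.map_cons, List.map_nil, List.sum_append,
    List.sum_cons, List.sum_nil, voterScore_pair]
  norm_num [bordaγ, max_def, posIn, perm3, Finset.filter_insert, Finset.filter_singleton]

set_option maxHeartbeats 1000000 in
lemma tsV2_12 : totalScore .lmax bordaγ ({0,1,2} : Finset ℕ) V2 2 {1,2} = 7 := by
  rw [totalScore]
  simp only [V1, V2, List.map_append, List.map_cons, List.map_nil, List.sum_append,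
    List.sum_cons, List.sum_nil, voterScore_pair]
  norm_num [bordaγ, max_def, posIn, perm3, Finset.filter_insert, Finset.filter_singleton]

set_option maxHeartbeats 1000000 in
lemma tsV12_01 : totalScore .lmax bordaγ ({0,1,2} : Finset ℕ) (V1 ++ V2) 2 {0,1} = 13 := by
  rw [totalScore]
  simp only [V1, V2, List.map_append, List.map_cons, List.map_nil, List.sum_append,
    List.sum_cons, List.sum_nil, voterScore_pair]
  norm_num [bordaγ, max_def, posIn, perm3, Finset.filter_insert, Finset.filter_singleton]

set_option maxHeartbeats 1000000 in
lemma tsV12_02 : totalScore .lmax bordaγ ({0,1,2} : Finset ℕ) (V1 ++ V2) 2 {0,2} = 13 := by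
  rw [totalScore]
  simp only [V1, V2, List.map_append, List.map_cons, List.map_nil, List.sum_append,
    List.sum_cons, List.sum_nil, voterScore_pair]
  norm_num [bordaγ, max_def, posIn, perm3, Finset.filter_insert, Finset.filter_singleton]

set_option maxHeartbeats 1000000 in
lemma tsV12_12 : totalScore .lmax bordaγ ({0,1,2} : Finset ℕ) (V1 ++ V2) 2 {1,2} = 14 := by
  rw [totalScore]
  simp only [V1, V2, List.map_append, List.map_cons, List.map_nil, List.sum_append,
    List.sum_cons, List.sum_nil, voterScore_pair]
  norm_num [bordaγ, max_def, posIn, perm3, Finset.filter_insert, Finset.filter_singleton]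

set_option maxHeartbeats 1000000 in
lemma tsV1s_0 : totalScore .lmax bordaγ ({0,1} : Finset ℕ) V1 1 {0} = 2 := by
  rw [totalScore]
  simp only [V1, V2, List.map_append, List.map_cons, List.map_nil, List.sum_append,
    List.sum_cons, List.sum_nil, voterScore_single]
  norm_num [bordaγ, posIn, perm3, Finset.filter_insert, Finset.filter_singleton]

set_option maxHeartbeats 1000000 in
lemma tsV1s_1 : totalScore .lmax bordaγ ({0,1} : Finset ℕ) V1 1 {1} = 2 := by
  rw [totalScore]
  simp only [V1, V2, List.map_append, List.map_cons, List.map_nil, List.sum_append,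
    List.sum_cons, List.sum_nil, voterScore_single]
  norm_num [bordaγ, posIn, perm3, Finset.filter_insert, Finset.filter_singleton]

set_option maxHeartbeats 1000000 in
lemma tsV2s_0 : totalScore .lmax bordaγ ({0,2} : Finset ℕ) V2 1 {0} = 2 := by
  rw [totalScore]
  simp only [V1, V2, List.map_append, List.map_cons, List.map_nil, List.sum_append,
    List.sum_cons, List.sum_nil, voterScore_single]
  norm_num [bordaγ, posIn, perm3, Finset.filter_insert, Finset.filter_singleton]

set_option maxHeartbeats 1000000 in
lemma tsV2s_2 : totalScore .lmax bordaγ ({0,2} : Finset ℕ) V2 1 {2} = 2 := by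
  rw [totalScore]
  simp only [V1, V2, List.map_append, List.map_cons, List.map_nil, List.sum_append,
    List.sum_cons, List.sum_nil, voterScore_single]
  norm_num [bordaγ, posIn, perm3, Finset.filter_insert, Finset.filter_singleton]

lemma sW1 : ({0,1} : Finset ℕ) ∈ scoreWinners .lmax bordaγ ({0,1,2} : Finset ℕ) V1 2 := by
  refine ⟨by decide, by decide, ?_⟩
  intro T hT hc
  rcases pair_cases hT hc with rfl|rfl|rfl
  · rw [tsV1_01]
  · rw [tsV1_02, tsV1_01]; norm_num
  · rw [tsV1_12, tsV1_01]

lemma sW1b : ({0} : Finset ℕ) ∈ scoreWinners .lmax bordaγ ({0,1} : Finset ℕ) V1 1 := by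
  refine ⟨by decide, by decide, ?_⟩
  intro T hT hc
  rcases single_cases hT hc with rfl|rfl
  · rw [tsV1s_0]
  · rw [tsV1s_1, tsV1s_0]

lemma sW2 : ({0,2} : Finset ℕ) ∈ scoreWinners .lmax bordaγ ({0,1,2} : Finset ℕ) V2 2 := by
  refine ⟨by decide, by decide, ?_⟩
  intro T hT hc
  rcases pair_cases hT hc with rfl|rfl|rfl
  · rw [tsV2_01, tsV2_02]; norm_num
  · rw [tsV2_02]
  · rw [tsV2_12, tsV2_02]

lemma sW2b : ({0} : Finset ℕ) ∈ scoreWinners .lmax bordaγ ({0,2} : Finset ℕ) V2 1 := by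
  refine ⟨by decide, by decide, ?_⟩
  intro T hT hc
  rcases single_cases hT hc with rfl|rfl
  · rw [tsV2s_0]
  · rw [tsV2s_2, tsV2s_0]

lemma sW12 {W : Finset ℕ}
    (hW : W ∈ scoreWinners .lmax bordaγ ({0,1,2} : Finset ℕ) (V1 ++ V2) 2) :
    W = {1,2} := by
  obtain ⟨hsub, hcard, hmax⟩ := hW
  rcases pair_cases hsub hcard with rfl|rfl|rfl
  · have := hmax {1,2} (by decide) (by decide)
    rw [tsV12_12, tsV12_01] at this; norm_num at this
  · have := hmax {1,2} (by decide) (by decide)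
    rw [tsV12_12, tsV12_02] at this; norm_num at this
  · rfl

lemma descList_length : ∀ n, (descList n).length = n
  | 0 => rfl
  | n+1 => by simp [descList, descList_length n]

lemma descList_chain : ∀ n m, n < m → List.Chain (· > ·) m (descList n)
  | 0, m, _ => List.Chain.nil
  | n+1, m, h => List.Chain.cons h (descList_chain n (n+1) (Nat.lt_succ_self n))

lemma descList_mem : ∀ n, ∀ k ∈ descList n, 1 ≤ k
  | 0, k, h => by simp [descList] at h
  | n+1, k, h => by
    rcases List.mem_cons.1 h with rfl | h
    · omega
    · exact descList_mem n k h

lemma base1 : ({0} : Finset ℕ) ∈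
    msWinners .lmax bordaγ (descList 2) ({0,1,2} : Finset ℕ) V1 :=
  ⟨{0,1}, sW1, {0}, sW1b, rfl⟩

lemma base2 : ({0} : Finset ℕ) ∈
    msWinners .lmax bordaγ (descList 2) ({0,1,2} : Finset ℕ) V2 :=
  ⟨{0,2}, sW2, {0}, sW2b, rfl⟩

lemma base12 : ({0} : Finset ℕ) ∉
    msWinners .lmax bordaγ (descList 2) ({0,1,2} : Finset ℕ) (V1 ++ V2) := by
  rintro ⟨S₁, hS₁, S₂, hS₂, hmem⟩
  rw [sW12 hS₁] at hS₂
  obtain ⟨hsub, -, -⟩ := hS₂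
  have h0 : ({0} : Finset ℕ) = S₂ := hmem
  have : (0 : ℕ) ∈ ({1,2} : Finset ℕ) := hsub (h0 ▸ Finset.mem_singleton_self 0)
  simp at this


-- MORE_LEMMAS

end MSCC

/-- For every `t ≥ 2`, the `t`-stage `(ℓ_max, Borda)`-rule (the
Chamberlin–Courant rule, with position scores `Borda^{m,k}(p) = m − p` and
committee score `f_v(S) = max_{c ∈ S} (m − p_v(c))`, applied at every stage) does
not satisfy Consistency. -/
theorem multistage_cc_not_consistent (t : ℕ) (ht : 2 ≤ t) :
    ¬ MSConsistent ScoreNorm.lmax (fun m _ p => (m : ℝ) - (p : ℝ)) t := by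
  intro h
  have hb : (fun (m _ p : ℕ) => (m : ℝ) - (p : ℝ)) = MSCC.bordaγ := rfl
  rw [hb] at h
  set C : Finset ℕ := Finset.range (t + 1) with hC
  have hsub : ({0,1,2} : Finset ℕ) ⊆ C := by
    intro y hy
    simp only [Finset.mem_insert, Finset.mem_singleton] at hy
    simp only [hC, Finset.mem_range]
    omega
  have hcard : C.card = (t - 2) + 3 := by
    simp only [hC, Finset.card_range]; omega
  have ht2 : t - 2 + 2 = t := by omega
  -- the reduction lemmas
  have hL1 := MSCC.L MSCC.hV1 MSCC.htops1 (t - 2) C hsub hcard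
  have hL2 := MSCC.L MSCC.hV2 MSCC.htops2 (t - 2) C hsub hcard
  have hL12 := MSCC.L MSCC.hV12 MSCC.htops12 (t - 2) C hsub hcard
  rw [ht2] at hL1 hL2 hL12
  -- strict preferences
  have sp1 : StrictPrefs C MSCC.V1 := fun v hv =>
    (MSCC.perm3_inj (MSCC.hV1 v hv)).injOn
  have sp2 : StrictPrefs C MSCC.V2 := fun v hv =>
    (MSCC.perm3_inj (MSCC.hV2 v hv)).injOn
  -- stage vector facts
  have hne : MSCC.descList t ≠ [] := by
    cases t with
    | zero => omega
    | succ n => simp [MSCC.descList]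
  have hlen : (MSCC.descList t).length = t := MSCC.descList_length t
  have hvalid : ValidVec C (MSCC.descList t) := by
    constructor
    · rw [hC, Finset.card_range]
      exact MSCC.descList_chain t (t + 1) (Nat.lt_succ_self t)
    · exact MSCC.descList_mem t
  -- common winner
  have m1 : ({0} : Finset ℕ) ∈ msWinners .lmax MSCC.bordaγ (MSCC.descList t) C MSCC.V1 := by
    rw [hL1]; exact MSCC.base1
  have m2 : ({0} : Finset ℕ) ∈ msWinners .lmax MSCC.bordaγ (MSCC.descList t) C MSCC.V2 := by
    rw [hL2]; exact MSCC.base2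
  have hcons := h ℕ C MSCC.V1 MSCC.V2 sp1 sp2 (MSCC.descList t) hne hlen hvalid
    ⟨{0}, m1, m2⟩
  have : ({0} : Finset ℕ) ∈
      msWinners .lmax MSCC.bordaγ (MSCC.descList t) C (MSCC.V1 ++ MSCC.V2) := by
    rw [hcons]; exact ⟨m1, m2⟩
  rw [hL12] at this
  exact MSCC.base12 this
end

section
/- Let R be a single-stage ω-Thiele rule. If R satisfies Committee Monotonicity, then ω(i) − ω(i−1) = ω(j) − ω(j−1) for all integers i, j ≥ 1. -/
/-- The ω-Thiele score of a committee `S`, given voters identified with their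
approval ballots: `Σ_{v ∈ V} ω(|S ∩ A_v|)`. -/
noncomputable def thieleScore {α : Type} [DecidableEq α] (ω : ℕ → ℝ)
    (V : List (Finset α)) (S : Finset α) : ℝ :=
  (V.map fun A => ω (S ∩ A).card).sum

/-- Winning committees of the single-stage ω-Thiele rule on the candidate pool
`C` with target size `k`: all size-`k` committees maximizing the ω-Thiele score. -/
def thieleWinners {α : Type} [DecidableEq α] (ω : ℕ → ℝ)
    (C : Finset α) (V : List (Finset α)) (k : ℕ) : Set (Finset α) :=
  {S | S ⊆ C ∧ S.card = k ∧
    ∀ T ⊆ C, T.card = k → thieleScore ω V T ≤ thieleScore ω V S}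

/-- Committee Monotonicity of the single-stage ω-Thiele rule: for every election
(over any candidate type, ballots drawn from the candidate set) and every `k`,
(i) every size-`k` winning committee extends to a size-`(k+1)` winning committee,
and (ii) every size-`(k+1)` winning committee contains a size-`k` winning
committee. -/
def ThieleCommitteeMonotone (ω : ℕ → ℝ) : Prop :=
  ∀ (α : Type) [DecidableEq α] (C : Finset α) (V : List (Finset α)),
    (∀ A ∈ V, A ⊆ C) →
    ∀ k : ℕ, 1 ≤ k → k + 1 < C.card →
      (∀ S ∈ thieleWinners ω C V k, ∃ S' ∈ thieleWinners ω C V (k + 1), S ⊂ S') ∧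
      (∀ S ∈ thieleWinners ω C V (k + 1), ∃ S' ∈ thieleWinners ω C V k, S' ⊂ S)

lemma thieleScore_cons {α : Type} [DecidableEq α] (ω : ℕ → ℝ) (A : Finset α)
    (V : List (Finset α)) (S : Finset α) :
    thieleScore ω (A :: V) S = ω (S ∩ A).card + thieleScore ω V S := by
  simp [thieleScore]

lemma thieleScore_append {α : Type} [DecidableEq α] (ω : ℕ → ℝ)
    (V W : List (Finset α)) (S : Finset α) :
    thieleScore ω (V ++ W) S = thieleScore ω V S + thieleScore ω W S := by
  simp [thieleScore]

lemma thieleScore_replicate {α : Type} [DecidableEq α] (ω : ℕ → ℝ) (t : ℕ)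
    (A S : Finset α) :
    thieleScore ω (List.replicate t A) S = t * ω (S ∩ A).card := by
  simp [thieleScore, List.map_replicate, List.sum_replicate, nsmul_eq_mul]

lemma thieleScore_singletons (ω : ℕ → ℝ) (h0 : ω 0 = 0) (B S : Finset ℕ) :
    thieleScore ω (B.toList.map fun x => ({x} : Finset ℕ)) S
      = ω 1 * (S ∩ B).card := by
  unfold thieleScore
  rw [List.map_map]
  have h1 : ∀ x : ℕ, ((fun A => ω (S ∩ A).card) ∘ fun x => ({x} : Finset ℕ)) x
      = if x ∈ S then ω 1 else 0 := by
    intro x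
    by_cases hx : x ∈ S
    · simp [hx, Finset.inter_singleton_of_mem hx]
    · simp [hx, Finset.inter_singleton_of_notMem hx, h0]
  calc (B.toList.map ((fun A => ω (S ∩ A).card) ∘ fun x => ({x} : Finset ℕ))).sum
      = (B.toList.map (fun x => if x ∈ S then ω 1 else 0)).sum := by
        congr 1; exact List.map_congr_left (fun x _ => h1 x)
    _ = ∑ x ∈ B, (if x ∈ S then ω 1 else 0) := Finset.sum_map_toList B _
    _ = ∑ x ∈ B ∩ S, ω 1 := Finset.sum_ite_mem B S _
    _ = ω 1 * (S ∩ B).card := by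
        rw [Finset.sum_const, Finset.inter_comm, nsmul_eq_mul, mul_comm]

lemma card_inter_union_singleton {a : ℕ} {s : Finset ℕ} (ha : a ∉ s)
    (T : Finset ℕ) :
    (T ∩ ({a} ∪ s)).card = (T ∩ {a}).card + (T ∩ s).card := by
  rw [Finset.inter_union_distrib_left, Finset.card_union_of_disjoint]
  exact Finset.disjoint_of_subset_left Finset.inter_subset_right
    (Finset.disjoint_of_subset_right Finset.inter_subset_right
      (by simp [Finset.disjoint_singleton_left, ha]))

lemma convex_contra (ω : ℕ → ℝ) (h0 : ω 0 = 0)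
    (hCM : ThieleCommitteeMonotone ω)
    (n : ℕ) (hn : 1 ≤ n) (hlin : ∀ i ≤ n, ω i = ω 1 * i)
    (hq : ω 1 * (n + 1) < ω (n + 1)) : False := by
  classical
  set c := ω 1 with hc
  set A : Finset ℕ := Finset.range (n + 1) with hA
  set B : Finset ℕ := Finset.Ico (n + 1) (2 * n + 2) with hB
  set C : Finset ℕ := Finset.range (2 * n + 2) with hC
  set V : List (Finset ℕ) := A :: (B.toList.map fun x => ({x} : Finset ℕ)) with hV
  have hAB : Disjoint A B := by
    rw [Finset.disjoint_left]
    intro x hx hx'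
    rw [hA, Finset.mem_range] at hx
    rw [hB, Finset.mem_Ico] at hx'
    omega
  have hABC : A ∪ B = C := by
    rw [hA, hB, hC, Finset.range_eq_Ico, Finset.range_eq_Ico]
    exact Finset.Ico_union_Ico_eq_Ico (a := 0) (b := n + 1) (c := 2 * n + 2) (by omega) (by omega)
  have hsplit : ∀ T : Finset ℕ, T ⊆ C → (T ∩ A).card + (T ∩ B).card = T.card := by
    intro T hT
    rw [← Finset.card_union_of_disjoint
      (Finset.disjoint_of_subset_left Finset.inter_subset_right
        (Finset.disjoint_of_subset_right Finset.inter_subset_right hAB)),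
      ← Finset.inter_union_distrib_left, hABC,
      Finset.inter_eq_left.mpr hT]
  have hscore : ∀ T : Finset ℕ,
      thieleScore ω V T = ω (T ∩ A).card + c * (T ∩ B).card := by
    intro T
    rw [hV, thieleScore_cons, thieleScore_singletons ω h0]
  -- any T ⊆ C with (T∩A).card ≤ n has score c * T.card
  have hgen : ∀ T : Finset ℕ, T ⊆ C → (T ∩ A).card ≤ n →
      thieleScore ω V T = c * T.card := by
    intro T hT hTA
    rw [hscore T, hlin _ hTA, ← mul_add, ← Nat.cast_add, hsplit T hT]
  set S₀ : Finset ℕ := Finset.Ico (n + 1) (2 * n + 1) with hS₀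
  have hS₀C : S₀ ⊆ C := by
    intro x hx
    rw [hS₀, Finset.mem_Ico] at hx
    rw [hC, Finset.mem_range]
    omega
  have hS₀card : S₀.card = n := by rw [hS₀, Nat.card_Ico]; omega
  have hS₀A : S₀ ∩ A = ∅ := by
    rw [Finset.eq_empty_iff_forall_notMem]
    intro x hx
    rw [Finset.mem_inter, hS₀, Finset.mem_Ico, hA, Finset.mem_range] at hx
    omega
  have hS₀win : S₀ ∈ thieleWinners ω C V n := by
    refine ⟨hS₀C, hS₀card, fun T hT hTc => ?_⟩
    rw [hgen T hT (by rw [← hTc]; exact Finset.card_le_card Finset.inter_subset_left), hTc,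
      hgen S₀ hS₀C (by rw [hS₀A]; simp), hS₀card]
  have hballots : ∀ Av ∈ V, Av ⊆ C := by
    intro Av hAv
    rw [hV, List.mem_cons] at hAv
    rcases hAv with rfl | hAv
    · rw [hA, hC]; exact Finset.range_subset_range.mpr (by omega)
    · obtain ⟨x, hx, rfl⟩ := List.mem_map.1 hAv
      rw [Finset.mem_toList, hB, Finset.mem_Ico] at hx
      intro y hy
      rw [Finset.mem_singleton] at hy
      rw [hC, Finset.mem_range]
      omega
  have hCcard : n + 1 < C.card := by rw [hC, Finset.card_range]; omega
  obtain ⟨S', hS'w, hss⟩ := (hCM ℕ C V hballots n hn hCcard).1 S₀ hS₀win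
  obtain ⟨hS'C, hS'card, hS'max⟩ := hS'w
  have hAC : A ⊆ C := by rw [hA, hC]; exact Finset.range_subset_range.mpr (by omega)
  have h1 : thieleScore ω V A ≤ thieleScore ω V S' :=
    hS'max A hAC (by rw [hA, Finset.card_range])
  have hscoreA : thieleScore ω V A = ω (n + 1) := by
    rw [hscore A, Finset.inter_self,
      Finset.disjoint_iff_inter_eq_empty.mp hAB, hA, Finset.card_range]
    simp
  have hmem : n + 1 ∈ S' := hss.subset (by rw [hS₀, Finset.mem_Ico]; omega)
  have hS'A : (S' ∩ A).card ≤ n := by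
    have hsub : S' ∩ A ⊆ S'.erase (n + 1) := by
      intro x hx
      rw [Finset.mem_inter] at hx
      rw [Finset.mem_erase]
      refine ⟨?_, hx.1⟩
      rintro rfl
      have := hx.2
      rw [hA, Finset.mem_range] at this
      omega
    calc (S' ∩ A).card ≤ (S'.erase (n + 1)).card := Finset.card_le_card hsub
      _ = n := by rw [Finset.card_erase_of_mem hmem, hS'card]; omega

  have hscoreS' : thieleScore ω V S' = c * (n + 1) := by
    rw [hgen S' hS'C hS'A, hS'card]; push_cast; ring
  rw [hscoreA, hscoreS'] at h1
  push_cast at h1 hq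
  linarith

set_option maxHeartbeats 2000000 in
lemma concave_contra (ω : ℕ → ℝ) (hmono : Monotone ω) (h0 : ω 0 = 0)
    (hCM : ThieleCommitteeMonotone ω)
    (n : ℕ) (hn : 1 ≤ n) (hlin : ∀ i ≤ n, ω i = ω 1 * i)
    (hq : ω (n + 1) < ω 1 * (n + 1)) : False := by
  classical
  set c := ω 1 with hc
  set q : ℝ := ω (n + 1) - c * n with hqdef
  have hcn : ω n = c * n := hlin n le_rfl
  have hq0 : 0 ≤ q := by
    have := hmono (Nat.le_succ n)
    rw [hqdef]; rw [hcn] at this; linarith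
  have hqc : q < c := by rw [hqdef]; push_cast at hq ⊢; linarith
  have hcpos : 0 < c := lt_of_le_of_lt hq0 hqc
  set m : ℕ := ⌈c / (c - q)⌉₊ with hm
  have hm1 : 1 ≤ m := Nat.ceil_pos.mpr (div_pos hcpos (by linarith))
  have hkey : ((m : ℝ) + 1) * q < c * m := by
    have h1 : c / (c - q) ≤ (m : ℝ) := Nat.le_ceil _
    have h2 : c ≤ (m : ℝ) * (c - q) := by
      rwa [div_le_iff₀ (by linarith)] at h1
    nlinarith
  -- the election
  set X : Finset ℕ := Finset.range n with hX
  set P : Finset ℕ := Finset.range (n + 1) with hP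
  set Q : Finset ℕ := {n + 1} ∪ Finset.range n with hQ
  set C : Finset ℕ := Finset.range (n + 2) with hC
  set V : List (Finset ℕ) :=
    List.replicate (m + 1) P ++ (List.replicate (m + 1) Q ++
      (List.replicate m {n} ++ List.replicate m {n + 1})) with hV
  have hscore : ∀ T : Finset ℕ, thieleScore ω V T =
      (m + 1) * ω (T ∩ P).card + (m + 1) * ω (T ∩ Q).card +
        m * ω (T ∩ {n}).card + m * ω (T ∩ {n + 1}).card := by
    intro T
    rw [hV, thieleScore_append, thieleScore_append, thieleScore_append,
      thieleScore_replicate, thieleScore_replicate, thieleScore_replicate,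
      thieleScore_replicate]
    push_cast; ring
  have hPeq : P = {n} ∪ X := by
    rw [hP, hX, Finset.range_add_one, Finset.insert_eq]
  have hCeq : C = {n + 1} ∪ P := by
    rw [hC, hP, Finset.range_add_one, Finset.insert_eq]
  have hnX : n ∉ X := by rw [hX]; simp
  have hn1X : n + 1 ∉ X := by rw [hX]; simp
  have hn1P : n + 1 ∉ P := by rw [hP]; simp
  -- decomposition of cardinalities for committees T ⊆ C
  have hdecomp : ∀ T : Finset ℕ, T ⊆ C →
      (T ∩ P).card = (T ∩ {n}).card + (T ∩ X).card ∧
      (T ∩ Q).card = (T ∩ {n + 1}).card + (T ∩ X).card ∧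
      (T ∩ {n + 1}).card + ((T ∩ {n}).card + (T ∩ X).card) = T.card := by
    intro T hT
    have h2 : (T ∩ P).card = (T ∩ {n}).card + (T ∩ X).card := by
      rw [hPeq]; exact card_inter_union_singleton hnX T
    have h1 : (T ∩ C).card = (T ∩ {n + 1}).card + (T ∩ P).card := by
      rw [hCeq]; exact card_inter_union_singleton hn1P T
    rw [Finset.inter_eq_left.mpr hT] at h1
    exact ⟨h2, by rw [hQ]; exact card_inter_union_singleton hn1X T, by omega⟩
  have hsing : ∀ (a : ℕ) (T : Finset ℕ), (T ∩ {a}).card ≤ 1 := by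
    intro a T
    calc (T ∩ {a}).card ≤ ({a} : Finset ℕ).card :=
          Finset.card_le_card Finset.inter_subset_right
      _ = 1 := Finset.card_singleton a
  -- score of X
  have hXP : X ∩ P = X := Finset.inter_eq_left.mpr
    (by rw [hX, hP]; exact Finset.range_subset_range.mpr (by omega))
  have hXQ : X ∩ Q = X := Finset.inter_eq_left.mpr
    (by rw [hQ]; exact Finset.subset_union_right)
  have hXn : X ∩ {n} = ∅ := by
    rw [Finset.eq_empty_iff_forall_notMem]
    intro a ha
    rw [Finset.mem_inter, Finset.mem_singleton] at ha
    exact hnX (ha.2 ▸ ha.1)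
  have hXn1 : X ∩ {n + 1} = ∅ := by
    rw [Finset.eq_empty_iff_forall_notMem]
    intro a ha
    rw [Finset.mem_inter, Finset.mem_singleton] at ha
    exact hn1X (ha.2 ▸ ha.1)
  have hXcard : X.card = n := by rw [hX, Finset.card_range]
  have hscoreX : thieleScore ω V X = 2 * (m + 1) * (c * n) := by
    rw [hscore X, hXP, hXQ, hXn, hXn1, hXcard, Finset.card_empty, h0, hcn]
    ring
  have hXC : X ⊆ C := by rw [hX, hC]; exact Finset.range_subset_range.mpr (by omega)
  -- X is a winner at stage n
  have hXwin : X ∈ thieleWinners ω C V n := by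
    refine ⟨hXC, hXcard, fun T hT hTc => ?_⟩
    obtain ⟨hTP, hTQ, hTsum⟩ := hdecomp T hT
    rw [hTc] at hTsum
    have hb := hsing n T
    have hg := hsing (n + 1) T
    rw [hscore T, hscoreX, hTP, hTQ,
      hlin _ (by omega), hlin _ (by omega), hlin _ (by omega), hlin _ (by omega)]
    push_cast
    have hsumR : ((T ∩ {n + 1}).card : ℝ) + (((T ∩ {n}).card : ℝ) + ((T ∩ X).card : ℝ))
        = (n : ℝ) := by exact_mod_cast congrArg (Nat.cast : ℕ → ℝ) hTsum
    have hxR : ((T ∩ X).card : ℝ)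
        = (n : ℝ) - ((T ∩ {n}).card : ℝ) - ((T ∩ {n + 1}).card : ℝ) := by linarith
    rw [hxR]
    nlinarith [mul_nonneg hcpos.le
      (show (0:ℝ) ≤ ((T ∩ {n}).card : ℝ) + ((T ∩ {n+1}).card : ℝ) from add_nonneg (Nat.cast_nonneg _) (Nat.cast_nonneg _))]
  -- ballots are subsets of C
  have hballots : ∀ Av ∈ V, Av ⊆ C := by
    intro Av hAv
    rw [hV] at hAv
    simp only [List.mem_append, List.mem_replicate] at hAv
    have hPC : P ⊆ C := by rw [hP, hC]; exact Finset.range_subset_range.mpr (by omega)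
    have hQC : Q ⊆ C := by
      rw [hQ, hC]
      intro a ha
      rw [Finset.mem_union, Finset.mem_singleton, Finset.mem_range] at ha
      rw [Finset.mem_range]
      omega
    have hnC : ({n} : Finset ℕ) ⊆ C := by
      rw [hC]; intro a ha; rw [Finset.mem_singleton] at ha; rw [Finset.mem_range]; omega
    have hn1C : ({n + 1} : Finset ℕ) ⊆ C := by
      rw [hC]; intro a ha; rw [Finset.mem_singleton] at ha; rw [Finset.mem_range]; omega
    rcases hAv with ⟨_, rfl⟩ | ⟨_, rfl⟩ | ⟨_, rfl⟩ | ⟨_, rfl⟩ <;> assumption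
  have hCcard : n + 1 < C.card := by rw [hC, Finset.card_range]; omega
  obtain ⟨S', hS'w, hss⟩ := (hCM ℕ C V hballots n hn hCcard).1 X hXwin
  obtain ⟨hS'C, hS'card, hS'max⟩ := hS'w
  -- analyze S'
  obtain ⟨hSP, hSQ, hSsum⟩ := hdecomp S' hS'C
  have hSX : S' ∩ X = X := Finset.inter_eq_right.mpr hss.subset
  rw [hSX, hXcard] at hSP hSQ hSsum
  rw [hS'card] at hSsum
  have hb := hsing n S'
  have hg := hsing (n + 1) S'
  have hcases : ((S' ∩ {n}).card = 1 ∧ (S' ∩ {n + 1}).card = 0) ∨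
      ((S' ∩ {n}).card = 0 ∧ (S' ∩ {n + 1}).card = 1) := by omega
  have hscoreS' : thieleScore ω V S' =
      (m + 1) * ω (n + 1) + (m + 1) * (c * n) + m * c := by
    rcases hcases with ⟨h1, h2⟩ | ⟨h1, h2⟩ <;>
      · rw [hscore S', hSP, hSQ, h1, h2,
          show 1 + n = n + 1 from by omega, show 0 + n = n from by omega, hcn, h0, ← hc]
        ring
  -- the committee W
  set W : Finset ℕ := C.erase (n - 1) with hW
  have hWC : W ⊆ C := Finset.erase_subset (n - 1) C
  have hdC : (n - 1) ∈ C := by rw [hC, Finset.mem_range]; omega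
  have hWcard : W.card = n + 1 := by
    rw [hW, Finset.card_erase_of_mem hdC, hC, Finset.card_range]
    omega
  have hWX : (W ∩ X).card = n - 1 := by
    have hWXe : W ∩ X = X.erase (n - 1) := by
      ext a
      rw [hW, hX, Finset.mem_inter, Finset.mem_erase, Finset.mem_erase, hC,
        Finset.mem_range, Finset.mem_range]
      omega
    rw [hWXe, Finset.card_erase_of_mem (by rw [hX, Finset.mem_range]; omega), hXcard]
  have hWn : (W ∩ {n}).card = 1 := by
    rw [Finset.inter_singleton_of_mem
      (by rw [hW, Finset.mem_erase]; exact ⟨by omega, by rw [hC, Finset.mem_range]; omega⟩)]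
    exact Finset.card_singleton n
  have hWn1 : (W ∩ {n + 1}).card = 1 := by
    rw [Finset.inter_singleton_of_mem
      (by rw [hW, Finset.mem_erase]; exact ⟨by omega, by rw [hC, Finset.mem_range]; omega⟩)]
    exact Finset.card_singleton (n + 1)
  obtain ⟨hWP, hWQ, _⟩ := hdecomp W hWC
  rw [hWX, hWn] at hWP
  rw [hWX, hWn1] at hWQ
  rw [show 1 + (n - 1) = n from by omega] at hWP hWQ
  have hscoreW : thieleScore ω V W = 2 * (m + 1) * (c * n) + 2 * (m * c) := by
    rw [hscore W, hWP, hWQ, hWn, hWn1, hcn, ← hc]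
    push_cast
    ring
  have hfinal := hS'max W hWC hWcard
  rw [hscoreW, hscoreS'] at hfinal
  have hω1 : ω (n + 1) = c * n + q := by rw [hqdef]; ring
  rw [hω1] at hfinal
  nlinarith

/-- If a single-stage ω-Thiele rule (ω nondecreasing with
`ω(0) = 0`) satisfies Committee Monotonicity, then
`ω(i) − ω(i−1) = ω(j) − ω(j−1)` for all integers `i, j ≥ 1`. -/
theorem thiele_committee_monotone_linear (ω : ℕ → ℝ)
    (hmono : Monotone ω) (h0 : ω 0 = 0)
    (hCM : ThieleCommitteeMonotone ω) :
    ∀ i j : ℕ, 1 ≤ i → 1 ≤ j → ω i - ω (i - 1) = ω j - ω (j - 1) := by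
  have key : ∀ n : ℕ, ω n = ω 1 * n := by
    intro n
    induction n using Nat.strong_induction_on with
    | _ n IH =>
      rcases n with _ | _ | k
      · simp [h0]
      · simp
      · by_contra hne
        have hlin : ∀ i ≤ k + 1, ω i = ω 1 * i := fun i hi => IH i (by omega)
        rcases lt_or_gt_of_ne hne with hlt | hgt
        · refine concave_contra ω hmono h0 hCM (k + 1) (by omega) hlin ?_
          push_cast at hlt ⊢
          linarith
        · refine convex_contra ω h0 hCM (k + 1) (by omega) hlin ?_
          push_cast at hgt ⊢
          linarith
  intro i j hi hj
  obtain ⟨i', rfl⟩ : ∃ i', i = i' + 1 := ⟨i - 1, by omega⟩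
  obtain ⟨j', rfl⟩ : ∃ j', j = j' + 1 := ⟨j - 1, by omega⟩
  simp only [Nat.add_sub_cancel]
  rw [key (i' + 1), key i', key (j' + 1), key j']
  push_cast
  ring
end

section
/- For every t ≥ 1, the t-stage rule applying Approval Voting (the ω-Thiele method with ω(x) = x) at every stage satisfies Committee Monotonicity. -/
/-- Winning committees of the multi-stage ω-Thiele rule for stage vector `ks`,
applying the same ω-Thiele method with the same approval ballots at every stage:
the winning committee of each stage is the candidate pool of the next stage. -/
def msThiele {α : Type} [DecidableEq α] (ω : ℕ → ℝ) :
    List ℕ → Finset α → List (Finset α) → Set (Finset α)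
  | [], C, _ => {C}
  | k :: ks, C, V => {S | ∃ S₁ ∈ thieleWinners ω C V k, S ∈ msThiele ω ks S₁ V}

/-- candidate weight: number of approving voters, as a real. -/
noncomputable def wt {α : Type} [DecidableEq α] (V : List (Finset α)) (c : α) : ℝ :=
  (V.map fun A => if c ∈ A then (1 : ℝ) else 0).sum

lemma score_eq_sum_wt {α : Type} [DecidableEq α] (V : List (Finset α)) (S : Finset α) :
    thieleScore (fun x => (x : ℝ)) V S = ∑ c ∈ S, wt V c := by
  induction V with
  | nil => simp [thieleScore, wt]
  | cons A V ih =>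
    simp only [thieleScore, List.map_cons, List.sum_cons] at ih ⊢
    rw [ih]
    have : ((S ∩ A).card : ℝ) = ∑ c ∈ S, (if c ∈ A then (1 : ℝ) else 0) := by
      rw [Finset.sum_ite_mem S A (fun _ => (1:ℝ))]
      simp
    have hw : ∀ c, wt (A :: V) c = (if c ∈ A then (1 : ℝ) else 0) + wt V c := by
      intro c; simp [wt]
    rw [this]
    simp [hw, Finset.sum_add_distrib]

/-- Local (swap) optimality. -/
def LOpt {α : Type} [DecidableEq α] (w : α → ℝ) (C : Finset α) (k : ℕ)
    (S : Finset α) : Prop :=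
  S ⊆ C ∧ S.card = k ∧ ∀ s ∈ S, ∀ x ∈ C, x ∉ S → w x ≤ w s

lemma winners_eq_lopt {α : Type} [DecidableEq α] (C : Finset α) (V : List (Finset α))
    (k : ℕ) : thieleWinners (fun x => (x : ℝ)) C V k = {S | LOpt (wt V) C k S} := by
  ext S
  simp only [thieleWinners, Set.mem_setOf_eq, LOpt, score_eq_sum_wt]
  constructor
  · rintro ⟨hSC, hcard, hopt⟩
    refine ⟨hSC, hcard, fun s hs x hx hxS => ?_⟩
    have hk1 : 1 ≤ k := by
      rw [← hcard]; exact Finset.card_pos.mpr ⟨s, hs⟩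
    set T := insert x (S.erase s) with hT
    have hxe : x ∉ S.erase s := fun h => hxS (Finset.mem_of_mem_erase h)
    have hTC : T ⊆ C := by
      intro y hy
      rcases Finset.mem_insert.mp hy with rfl | hy
      · exact hx
      · exact hSC (Finset.mem_of_mem_erase hy)
    have hTcard : T.card = k := by
      rw [hT, Finset.card_insert_of_notMem hxe, Finset.card_erase_of_mem hs, hcard]
      omega
    have := hopt T hTC hTcard
    rw [hT, Finset.sum_insert hxe] at this
    have hsum : ∑ c ∈ S, wt V c = wt V s + ∑ c ∈ S.erase s, wt V c :=
      (Finset.add_sum_erase S (wt V) hs).symm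
    rw [hsum] at this
    linarith
  · rintro ⟨hSC, hcard, hloc⟩
    refine ⟨hSC, hcard, fun T hTC hTcard => ?_⟩
    have hdiff : (T \ S).card = (S \ T).card := by
      have h1 := Finset.card_sdiff_add_card_inter T S
      have h2 := Finset.card_sdiff_add_card_inter S T
      rw [Finset.inter_comm] at h2
      omega
    have hle : ∑ c ∈ T \ S, wt V c ≤ ∑ c ∈ S \ T, wt V c := by
      rcases Finset.eq_empty_or_nonempty (S \ T) with he | hne
      · have : (T \ S) = ∅ := Finset.card_eq_zero.mp (by rw [hdiff, he]; simp)
        rw [this, he]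
      · obtain ⟨s₀, hs₀, hmin⟩ := Finset.exists_min_image (S \ T) (wt V) hne
        have h1 : ∑ c ∈ T \ S, wt V c ≤ (T \ S).card • wt V s₀ := by
          apply Finset.sum_le_card_nsmul
          intro x hx
          have hxC : x ∈ C := hTC (Finset.mem_sdiff.mp hx).1
          exact hloc s₀ (Finset.mem_sdiff.mp hs₀).1 x hxC (Finset.mem_sdiff.mp hx).2
        have h2 : (S \ T).card • wt V s₀ ≤ ∑ c ∈ S \ T, wt V c :=
          Finset.card_nsmul_le_sum _ _ _ hmin
        rw [hdiff] at h1
        exact h1.trans h2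
    have e1 : ∑ c ∈ T ∩ S, wt V c + ∑ c ∈ T \ S, wt V c = ∑ c ∈ T, wt V c :=
      Finset.sum_inter_add_sum_sdiff T S _
    have e2 : ∑ c ∈ S ∩ T, wt V c + ∑ c ∈ S \ T, wt V c = ∑ c ∈ S, wt V c :=
      Finset.sum_inter_add_sum_sdiff S T _
    rw [Finset.inter_comm] at e2
    linarith

lemma lopt_extend {α : Type} [DecidableEq α] {w : α → ℝ} {C S : Finset α} {k : ℕ}
    (hS : LOpt w C k S) (hk : k < C.card) :
    ∃ c ∈ C, c ∉ S ∧ LOpt w C (k + 1) (insert c S) := by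
  obtain ⟨hSC, hcard, hloc⟩ := hS
  have hne : (C \ S).Nonempty := by
    rw [← Finset.card_pos, Finset.card_sdiff_of_subset hSC]; omega
  obtain ⟨c, hc, hmax⟩ := Finset.exists_max_image (C \ S) w hne
  obtain ⟨hcC, hcS⟩ := Finset.mem_sdiff.mp hc
  refine ⟨c, hcC, hcS, Finset.insert_subset hcC hSC,
    by rw [Finset.card_insert_of_notMem hcS, hcard], ?_⟩
  intro s hs x hx hxS
  have hxc : x ∈ C \ S := Finset.mem_sdiff.mpr ⟨hx, fun h => hxS (Finset.mem_insert_of_mem h)⟩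
  rcases Finset.mem_insert.mp hs with rfl | hs
  · exact hmax x hxc
  · exact hloc s hs x hx (Finset.mem_sdiff.mp hxc).2

lemma lopt_shrink {α : Type} [DecidableEq α] {w : α → ℝ} {C S : Finset α} {k : ℕ}
    (hS : LOpt w C (k + 1) S) :
    ∃ c ∈ S, LOpt w C k (S.erase c) := by
  obtain ⟨hSC, hcard, hloc⟩ := hS
  have hne : S.Nonempty := Finset.card_pos.mp (by omega)
  obtain ⟨c, hc, hmin⟩ := Finset.exists_min_image S w hne
  refine ⟨c, hc, (Finset.erase_subset c S).trans hSC,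
    by rw [Finset.card_erase_of_mem hc, hcard]; omega, ?_⟩
  intro s hs x hx hxe
  have hsS : s ∈ S := Finset.mem_of_mem_erase hs
  by_cases hxS : x ∈ S
  · have : x = c := by
      by_contra hne'
      exact hxe (Finset.mem_erase.mpr ⟨hne', hxS⟩)
    subst this
    exact hmin s hsS
  · exact hloc s hsS x hx hxS

lemma lopt_extend_many {α : Type} [DecidableEq α] {w : α → ℝ} {C : Finset α} (k d : ℕ)
    (hd : k + d ≤ C.card) :
    ∀ S : Finset α, LOpt w C k S → ∃ S', S ⊆ S' ∧ LOpt w C (k + d) S' := by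
  induction d with
  | zero => exact fun S hS => ⟨S, subset_rfl, hS⟩
  | succ d ih =>
    intro S hS
    obtain ⟨S', hSS', hS'⟩ := ih (by omega) S hS
    obtain ⟨c, _, hcS', h⟩ := lopt_extend hS' (by omega)
    exact ⟨insert c S', hSS'.trans (Finset.subset_insert c S'), h⟩

lemma chain_gt_of_mem {a b : ℕ} : ∀ {l : List ℕ}, List.Chain (· > ·) a l → b ∈ l → b < a := by
  intro l
  induction l generalizing a with
  | nil => intro _ h; simp at h
  | cons x xs ih =>
    intro hch hb
    simp only [List.Chain, List.isChain_cons_cons] at hch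
    rcases List.mem_cons.mp hb with rfl | hb
    · exact hch.1
    · exact (ih hch.2 hb).trans hch.1

lemma msThiele_collapse {α : Type} [DecidableEq α] (V : List (Finset α)) :
    ∀ (ks : List ℕ) (C : Finset α) (h : ks ≠ []),
      List.Chain (· > ·) C.card ks →
      msThiele (fun x => (x : ℝ)) ks C V = {S | LOpt (wt V) C (ks.getLast h) S} := by
  intro ks
  induction ks with
  | nil => intro _ h; exact absurd rfl h
  | cons k rest ih =>
    intro C h hchain
    simp only [List.Chain, List.isChain_cons_cons] at hchain
    cases rest with
    | nil =>
      ext S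
      simp only [msThiele, Set.mem_setOf_eq, List.getLast_singleton]
      constructor
      · rintro ⟨S₁, hS₁, hS⟩
        simp only [msThiele, Set.mem_singleton_iff] at hS
        subst hS
        rw [winners_eq_lopt] at hS₁
        exact hS₁
      · intro hS
        exact ⟨S, by rw [winners_eq_lopt]; exact hS, by simp [msThiele]⟩
    | cons k' rest' =>
      have hne : (k' :: rest') ≠ [] := by simp
      have hgl : (k :: k' :: rest').getLast h = (k' :: rest').getLast hne :=
        List.getLast_cons hne
      have hlast_lt_k : (k' :: rest').getLast hne < k :=
        chain_gt_of_mem hchain.2 (List.getLast_mem hne)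
      ext S
      rw [Set.mem_setOf_eq, hgl]
      constructor
      · rintro ⟨S₁, hS₁, hS⟩
        rw [winners_eq_lopt] at hS₁
        obtain ⟨hS₁C, hS₁card, hS₁loc⟩ := hS₁
        rw [ih S₁ hne (by rw [hS₁card]; exact hchain.2)] at hS
        obtain ⟨hSS₁, hScard, hSloc⟩ := hS
        refine ⟨hSS₁.trans hS₁C, hScard, fun s hs x hx hxS => ?_⟩
        by_cases hxS₁ : x ∈ S₁
        · exact hSloc s hs x hxS₁ hxS
        · exact hS₁loc s (hSS₁ hs) x hx hxS₁
      · intro hS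
        set m := (k' :: rest').getLast hne with hm
        obtain ⟨hSC, hScard, hSloc⟩ := hS
        obtain ⟨S₁, hSS₁, hS₁⟩ := lopt_extend_many m (k - m)
          (by have := hchain.1; omega) S ⟨hSC, hScard, hSloc⟩
        have hkm : m + (k - m) = k := by omega
        rw [hkm] at hS₁
        refine ⟨S₁, by rw [winners_eq_lopt]; exact hS₁, ?_⟩
        rw [ih S₁ hne (by rw [hS₁.2.1]; exact hchain.2)]
        exact ⟨hSS₁, hScard, fun s hs x hx hxS => hSloc s hs x (hS₁.1 hx) hxS⟩

/-- For every `t ≥ 1`, the `t`-stage rule applying Approval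
Voting (the ω-Thiele method with `ω(x) = x`) at every stage satisfies Committee
Monotonicity: for every election and all `t`-dimensional stage vectors `ks₁`,
`ks₂` with `k¹_t + 1 = k²_t`, every winning committee for `ks₁` extends to one
for `ks₂`, and every winning committee for `ks₂` contains one for `ks₁`. -/
theorem multistage_av_committee_monotone
    (t : ℕ) (ht : 1 ≤ t)
    (α : Type) [DecidableEq α] (C : Finset α) (V : List (Finset α))
    (hV : ∀ A ∈ V, A ⊆ C)
    (ks₁ ks₂ : List ℕ) (h₁ : ks₁ ≠ []) (h₂ : ks₂ ≠ [])
    (hl₁ : ks₁.length = t) (hl₂ : ks₂.length = t)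
    (hchain₁ : List.Chain (· > ·) C.card ks₁) (hpos₁ : ∀ k ∈ ks₁, 1 ≤ k)
    (hchain₂ : List.Chain (· > ·) C.card ks₂) (hpos₂ : ∀ k ∈ ks₂, 1 ≤ k)
    (hlast : ks₁.getLast h₁ + 1 = ks₂.getLast h₂) :
    (∀ S ∈ msThiele (fun x => (x : ℝ)) ks₁ C V,
        ∃ S' ∈ msThiele (fun x => (x : ℝ)) ks₂ C V, S ⊂ S') ∧
    (∀ S ∈ msThiele (fun x => (x : ℝ)) ks₂ C V,
        ∃ S' ∈ msThiele (fun x => (x : ℝ)) ks₁ C V, S' ⊂ S) := by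
  rw [msThiele_collapse V ks₁ C h₁ hchain₁, msThiele_collapse V ks₂ C h₂ hchain₂]
  set l₁ := ks₁.getLast h₁
  set l₂ := ks₂.getLast h₂
  have hl₁lt : l₁ < C.card := chain_gt_of_mem hchain₁ (List.getLast_mem h₁)
  constructor
  · intro S hS
    obtain ⟨c, _, hcS, h⟩ := lopt_extend hS hl₁lt
    rw [hlast] at h
    exact ⟨insert c S, h, Finset.ssubset_insert hcS⟩
  · intro S hS
    rw [← hlast] at hS
    obtain ⟨c, hc, h⟩ := lopt_shrink hS
    exact ⟨S.erase c, h, Finset.erase_ssubset hc⟩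
end

section
/- Let t ≥ 2 and let 𝓡 be the t-stage ω-Thiele rule, where the single-stage ω-Thiele rule satisfies Consistency and there exists an integer i_0 ≥ 2 such that ω(i_0−1) − ω(i_0−2) ≠ ω(i_0) − ω(i_0−1). Then 𝓡 does not satisfy Consistency: there exist a candidate set C, voter lists V_1 and V_2 (given by approval ballots) and a stage vector v⃗ such that 𝓡((C,V_1), v⃗) ∩ 𝓡((C,V_2), v⃗) ≠ ∅ but 𝓡((C, V_1 + V_2), v⃗) ≠ 𝓡((C,V_1), v⃗) ∩ 𝓡((C,V_2), v⃗). -/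
/-- Consistency of the single-stage ω-Thiele rule. -/
def ThieleConsistent (ω : ℕ → ℝ) : Prop :=
  ∀ (α : Type) [DecidableEq α] (C : Finset α) (V₁ V₂ : List (Finset α)),
    (∀ A ∈ V₁, A ⊆ C) → (∀ A ∈ V₂, A ⊆ C) →
    ∀ k : ℕ, 1 ≤ k → k < C.card →
    (thieleWinners ω C V₁ k ∩ thieleWinners ω C V₂ k).Nonempty →
    thieleWinners ω C (V₁ ++ V₂) k = thieleWinners ω C V₁ k ∩ thieleWinners ω C V₂ k

/-- Consistency of the `t`-stage ω-Thiele rule. -/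
def MSThieleConsistent (ω : ℕ → ℝ) (t : ℕ) : Prop :=
  ∀ (α : Type) [DecidableEq α] (C : Finset α) (V₁ V₂ : List (Finset α)),
    (∀ A ∈ V₁, A ⊆ C) → (∀ A ∈ V₂, A ⊆ C) →
    ∀ (ks : List ℕ), ks ≠ [] → ks.length = t →
      List.Chain (· > ·) C.card ks → (∀ k ∈ ks, 1 ≤ k) →
    (msThiele ω ks C V₁ ∩ msThiele ω ks C V₂).Nonempty →
    msThiele ω ks C (V₁ ++ V₂) = msThiele ω ks C V₁ ∩ msThiele ω ks C V₂

namespace MSNC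
open Finset

def fr : Finset ℕ := {0, 1, 2}

def Zb (m : ℕ) : Finset ℕ := Finset.Icc 3 (m + 2)

lemma card_fr : fr.card = 3 := by decide

lemma card_Zb (m : ℕ) : (Zb m).card = m := by
  simp [Zb]

lemma mem_Zb {m b : ℕ} : b ∈ Zb m ↔ 3 ≤ b ∧ b ≤ m + 2 := by simp [Zb]

lemma mem_fr {b : ℕ} : b ∈ fr ↔ b = 0 ∨ b = 1 ∨ b = 2 := by
  constructor
  · intro h
    fin_cases h <;> simp
  · rintro (rfl | rfl | rfl) <;> decide

lemma Zb_disj_fr (m : ℕ) : Disjoint (Zb m) fr := by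
  rw [Finset.disjoint_left]
  intro a ha haf
  rw [mem_Zb] at ha
  rw [mem_fr] at haf
  omega

def decList : ℕ → ℕ → List ℕ
  | 0, _ => []
  | n+1, k => k :: decList n (k - 1)

lemma decList_length (n k : ℕ) : (decList n k).length = n := by
  induction n generalizing k with
  | zero => rfl
  | succ n ih => simp [decList, ih]

lemma decList_chain (n k : ℕ) (h : n ≤ k) : List.Chain (· > ·) (k + 1) (decList n k) := by
  induction n generalizing k with
  | zero => exact List.Chain.nil
  | succ n ih =>
    refine List.Chain.cons (Nat.lt_succ_self k) ?_
    have h2 : List.Chain (· > ·) (k - 1 + 1) (decList n (k - 1)) := ih _ (by omega)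
    rwa [Nat.sub_add_cancel (by omega : 1 ≤ k)] at h2

lemma decList_mem_ge (n k : ℕ) (h : n ≤ k) : ∀ j ∈ decList n k, k + 1 - n ≤ j := by
  induction n generalizing k with
  | zero => simp [decList]
  | succ n ih =>
    intro j hj
    rw [decList, List.mem_cons] at hj
    rcases hj with rfl | hj
    · omega
    · have := ih (k - 1) (by omega) j hj
      omega

lemma score_append (ω : ℕ → ℝ) (V W : List (Finset ℕ)) (S : Finset ℕ) :
    thieleScore ω (V ++ W) S = thieleScore ω V S + thieleScore ω W S := by
  simp [thieleScore]

lemma score_replicate (ω : ℕ → ℝ) (n : ℕ) (A S : Finset ℕ) :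
    thieleScore ω (List.replicate n A) S = n * ω (S ∩ A).card := by
  simp [thieleScore, List.map_replicate, List.sum_replicate, nsmul_eq_mul]

lemma score_flatMap (ω : ℕ → ℝ) (l : List ℕ) (g : ℕ → List (Finset ℕ)) (S : Finset ℕ) :
    thieleScore ω (l.flatMap g) S = (l.map fun b => thieleScore ω (g b) S).sum := by
  induction l with
  | nil => simp [thieleScore]
  | cons b l ih => simp only [List.flatMap_cons, List.map_cons, List.sum_cons, score_append, ih]

lemma subset_card_pred_iff {P T : Finset ℕ} (hP : P.Nonempty) :
    (T ⊆ P ∧ T.card = P.card - 1) ↔ ∃ c ∈ P, T = P.erase c := by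
  constructor
  · rintro ⟨hTP, hc⟩
    have hlt : T.card < P.card := by
      have := Finset.card_pos.mpr hP; omega
    have hss : T ⊂ P := hTP.ssubset_of_ne (by rintro rfl; omega)
    obtain ⟨c, hcP, hcT⟩ := Finset.exists_of_ssubset hss
    refine ⟨c, hcP, ?_⟩
    have hsub : T ⊆ P.erase c := Finset.subset_erase.mpr ⟨hTP, hcT⟩
    have := Finset.eq_of_subset_of_card_le hsub ?_
    · exact this
    · rw [Finset.card_erase_of_mem hcP, hc]
  · rintro ⟨c, hcP, rfl⟩
    exact ⟨Finset.erase_subset _ _, Finset.card_erase_of_mem hcP⟩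


lemma erase_inter_fr (P : Finset ℕ) (hfrP : fr ⊆ P) (c : ℕ) :
    (P.erase c) ∩ fr = fr.erase c := by
  ext x
  simp only [Finset.mem_erase, Finset.mem_inter]
  constructor
  · rintro ⟨⟨hxc, _⟩, hxf⟩
    exact ⟨hxc, hxf⟩
  · rintro ⟨hxc, hxf⟩
    exact ⟨⟨hxc, hfrP hxf⟩, hxf⟩

/-- Winners characterized as "erase one non-base candidate, maximizing G". -/
def dropW (m : ℕ) (G : Finset ℕ → ℝ) (P : Finset ℕ) : Set (Finset ℕ) :=
  {T | ∃ c ∈ P, c ∉ Zb m ∧ T = P.erase c ∧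
    ∀ c' ∈ P, c' ∉ Zb m → G ((P.erase c') ∩ fr) ≤ G ((P.erase c) ∩ fr)}

section Generic

variable (ω : ℕ → ℝ) (m : ℕ) (Cand : Finset ℕ) (V : List (Finset ℕ)) (K : ℝ)
  (G : Finset ℕ → ℝ)

variable
  (hS1 : ∀ S ⊆ Cand, Zb m ⊆ S → thieleScore ω V S = K + G (S ∩ fr))
  (hS2 : ∀ S ⊆ Cand, ¬ Zb m ⊆ S → thieleScore ω V S < K)
  (hG0 : ∀ X : Finset ℕ, 0 ≤ G X)

include hS1 hS2 hG0

lemma winners_erase (P : Finset ℕ) (hZP : Zb m ⊆ P) (hPC : P ⊆ Cand)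
    (hne : ∃ c ∈ P, c ∉ Zb m) :
    thieleWinners ω P V (P.card - 1) = dropW m G P := by
  obtain ⟨c₀, hc₀P, hc₀Z⟩ := hne
  have hPne : P.Nonempty := ⟨c₀, hc₀P⟩
  have hsc : ∀ c ∈ P, c ∉ Zb m →
      thieleScore ω V (P.erase c) = K + G ((P.erase c) ∩ fr) := by
    intro c hcP hcZ
    exact hS1 _ ((Finset.erase_subset _ _).trans hPC)
      (Finset.subset_erase.mpr ⟨hZP, hcZ⟩)
  have hscZ : ∀ c ∈ Zb m, thieleScore ω V (P.erase c) < K := by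
    intro c hcZ
    refine hS2 _ ((Finset.erase_subset _ _).trans hPC) ?_
    intro h
    exact (Finset.notMem_erase c P) (h hcZ)
  ext T
  constructor
  · rintro ⟨hTP, hcard, hmax⟩
    obtain ⟨c, hcP, rfl⟩ := (subset_card_pred_iff hPne).mp ⟨hTP, hcard⟩
    have hcZ : c ∉ Zb m := by
      intro hcZ
      have h1 : thieleScore ω V (P.erase c₀) ≤ thieleScore ω V (P.erase c) :=
        hmax _ (Finset.erase_subset _ _) (Finset.card_erase_of_mem hc₀P)
      have h2 := hsc c₀ hc₀P hc₀Z
      have h3 := hscZ c hcZ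
      have h4 := hG0 ((P.erase c₀) ∩ fr)
      linarith
    refine ⟨c, hcP, hcZ, rfl, ?_⟩
    intro c' hc'P hc'Z
    have h1 : thieleScore ω V (P.erase c') ≤ thieleScore ω V (P.erase c) :=
      hmax _ (Finset.erase_subset _ _) (Finset.card_erase_of_mem hc'P)
    rw [hsc c hcP hcZ, hsc c' hc'P hc'Z] at h1
    linarith
  · rintro ⟨c, hcP, hcZ, rfl, hmx⟩
    refine ⟨Finset.erase_subset _ _, Finset.card_erase_of_mem hcP, ?_⟩
    intro T' hT'P hT'card
    obtain ⟨c', hc'P, rfl⟩ := (subset_card_pred_iff hPne).mp ⟨hT'P, hT'card⟩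
    by_cases hc'Z : c' ∈ Zb m
    · have h1 := hscZ c' hc'Z
      rw [hsc c hcP hcZ]
      have := hG0 ((P.erase c) ∩ fr)
      linarith
    · rw [hsc c hcP hcZ, hsc c' hc'P hc'Z]
      have := hmx c' hc'P hc'Z
      linarith

lemma padding
    (hfull : ∀ c ∈ fr, G (fr.erase c) < G fr) :
    ∀ (j : ℕ) (P : Finset ℕ), Zb m ∪ fr ⊆ P → P ⊆ Cand → P.card = m + 3 + j →
    msThiele ω (decList (j+2) (m+2+j)) P V = msThiele ω (decList 2 (m+2)) (Zb m ∪ fr) V := by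
  intro j
  induction j with
  | zero =>
    intro P hZfrP hPC hcard
    have hcard' : (Zb m ∪ fr).card = m + 3 := by
      rw [Finset.card_union_of_disjoint (Zb_disj_fr m), card_Zb, card_fr]
    have : Zb m ∪ fr = P := Finset.eq_of_subset_of_card_le hZfrP (by omega)
    rw [this]
  | succ j ih =>
    intro P hZfrP hPC hcard
    have hZP : Zb m ⊆ P := (Finset.subset_union_left).trans hZfrP
    have hfrP : fr ⊆ P := (Finset.subset_union_right).trans hZfrP
    -- there is a dummy
    have hcard' : (Zb m ∪ fr).card = m + 3 := by
      rw [Finset.card_union_of_disjoint (Zb_disj_fr m), card_Zb, card_fr]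
    have hdum : ∃ d ∈ P, d ∉ Zb m ∪ fr := by
      by_contra h
      push_neg at h
      have : P ⊆ Zb m ∪ fr := h
      have := Finset.card_le_card this
      omega
    obtain ⟨d₀, hd₀P, hd₀⟩ := hdum
    have hkey : decList (j+1+2) (m+2+(j+1)) = (m+3+j) :: decList (j+2) (m+2+j) := by
      rw [show m+2+(j+1) = m+3+j from by omega]
      show (m+3+j) :: decList (j+2) (m+3+j-1) = _
      rw [show m+3+j-1 = m+2+j from by omega]
    rw [hkey]
    have hstage : (m+3+j) = P.card - 1 := by omega
    rw [show msThiele ω ((m+3+j) :: decList (j+2) (m+2+j)) P V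
        = {S | ∃ S₁ ∈ thieleWinners ω P V (m+3+j), S ∈ msThiele ω (decList (j+2) (m+2+j)) S₁ V}
        from rfl]
    rw [hstage, winners_erase ω m Cand V K G hS1 hS2 hG0 P hZP hPC
      ⟨d₀, hd₀P, fun h => hd₀ (Finset.mem_union_left _ h)⟩]
    -- dropW P = erase a dummy
    have hdropW : ∀ T, T ∈ dropW m G P ↔ ∃ d ∈ P, d ∉ Zb m ∪ fr ∧ T = P.erase d := by
      intro T
      constructor
      · rintro ⟨c, hcP, hcZ, rfl, hmx⟩
        refine ⟨c, hcP, ?_, rfl⟩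
        intro hc
        rcases Finset.mem_union.mp hc with h | hcfr
        · exact hcZ h
        · have h1 := hmx d₀ hd₀P (fun h => hd₀ (Finset.mem_union_left _ h))
          rw [erase_inter_fr P hfrP c] at h1
          rw [erase_inter_fr P hfrP d₀] at h1
          rw [Finset.erase_eq_of_notMem (fun h => hd₀ (Finset.mem_union_right _ h))] at h1
          exact absurd h1 (not_le.mpr (hfull c hcfr))
      · rintro ⟨d, hdP, hd, rfl⟩
        refine ⟨d, hdP, fun h => hd (Finset.mem_union_left _ h), rfl, ?_⟩
        intro c' hc'P hc'Z
        rw [erase_inter_fr P hfrP d, erase_inter_fr P hfrP c',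
          Finset.erase_eq_of_notMem (fun h => hd (Finset.mem_union_right _ h))]
        by_cases hc'fr : c' ∈ fr
        · exact le_of_lt (hfull c' hc'fr)
        · rw [Finset.erase_eq_of_notMem hc'fr]
    ext S
    simp only [Set.mem_setOf_eq]
    constructor
    · rintro ⟨S₁, hS₁, hS⟩
      obtain ⟨d, hdP, hd, rfl⟩ := (hdropW S₁).mp hS₁
      rw [← ih (P.erase d) (Finset.subset_erase.mpr ⟨hZfrP, fun h => hd h⟩)
        ((Finset.erase_subset _ _).trans hPC)
        (by rw [Finset.card_erase_of_mem hdP]; omega)]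
      exact hS
    · intro hS
      refine ⟨P.erase d₀, (hdropW _).mpr ⟨d₀, hd₀P, hd₀, rfl⟩, ?_⟩
      rw [ih (P.erase d₀) (Finset.subset_erase.mpr ⟨hZfrP, fun h => hd₀ h⟩)
        ((Finset.erase_subset _ _).trans hPC)
        (by rw [Finset.card_erase_of_mem hd₀P]; omega)]
      exact hS

set_option linter.unusedSectionVars false in
set_option linter.unusedVariables false in
lemma stage1 (hZfrC : Zb m ∪ fr ⊆ Cand) (cdrop : ℕ) (hcd : cdrop ∈ fr)
    (hpair : ∀ c ∈ fr, c ≠ cdrop → G (fr.erase c) < G (fr.erase cdrop)) :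
    dropW m G (Zb m ∪ fr) = {(Zb m ∪ fr).erase cdrop} := by
  have hfrP : fr ⊆ Zb m ∪ fr := Finset.subset_union_right
  have hcdP : cdrop ∈ Zb m ∪ fr := hfrP hcd
  have hcdZ : cdrop ∉ Zb m := Finset.disjoint_right.mp (Zb_disj_fr m) hcd
  ext T
  constructor
  · rintro ⟨c, hcP, hcZ, rfl, hmx⟩
    have hcfr : c ∈ fr := by
      rcases Finset.mem_union.mp hcP with h | h
      · exact absurd h hcZ
      · exact h
    have hccd : c = cdrop := by
      by_contra hne
      have h1 := hmx cdrop hcdP hcdZ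
      rw [erase_inter_fr _ hfrP, erase_inter_fr _ hfrP] at h1
      exact absurd h1 (not_le.mpr (hpair c hcfr hne))
    rw [hccd]; rfl
  · rintro rfl
    refine ⟨cdrop, hcdP, hcdZ, rfl, ?_⟩
    intro c' hc'P hc'Z
    have hc'fr : c' ∈ fr := by
      rcases Finset.mem_union.mp hc'P with h | h
      · exact absurd h hc'Z
      · exact h
    rw [erase_inter_fr _ hfrP, erase_inter_fr _ hfrP]
    by_cases h : c' = cdrop
    · rw [h]
    · exact le_of_lt (hpair c' hc'fr h)

lemma coreEval (hZfrC : Zb m ∪ fr ⊆ Cand) (cdrop : ℕ) (hcd : cdrop ∈ fr)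
    (hpair : ∀ c ∈ fr, c ≠ cdrop → G (fr.erase c) < G (fr.erase cdrop)) :
    msThiele ω (decList 2 (m+2)) (Zb m ∪ fr) V = dropW m G (Zb m ∪ fr.erase cdrop) := by
  have hfrP : fr ⊆ Zb m ∪ fr := Finset.subset_union_right
  have hcdZ : cdrop ∉ Zb m := Finset.disjoint_right.mp (Zb_disj_fr m) hcd
  have hcardP : (Zb m ∪ fr).card = m + 3 := by
    rw [Finset.card_union_of_disjoint (Zb_disj_fr m), card_Zb, card_fr]
  have hQ : (Zb m ∪ fr).erase cdrop = Zb m ∪ fr.erase cdrop := by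
    ext x
    simp only [Finset.mem_erase, Finset.mem_union]
    constructor
    · rintro ⟨hxc, hx | hx⟩
      · exact Or.inl hx
      · exact Or.inr ⟨hxc, hx⟩
    · rintro (hx | hx)
      · exact ⟨fun h => hcdZ (h ▸ hx), Or.inl hx⟩
      · exact ⟨hx.1, Or.inr hx.2⟩
  -- a free candidate different from cdrop
  obtain ⟨c₁, hc₁fr, hc₁ne⟩ : ∃ c₁ ∈ fr, c₁ ≠ cdrop := by
    rcases mem_fr.mp hcd with rfl | rfl | rfl
    · exact ⟨1, by decide, by decide⟩
    · exact ⟨0, by decide, by decide⟩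
    · exact ⟨0, by decide, by decide⟩
  have hQZ : Zb m ⊆ Zb m ∪ fr.erase cdrop := Finset.subset_union_left
  have hQC : Zb m ∪ fr.erase cdrop ⊆ Cand := by
    rw [← hQ]
    exact (Finset.erase_subset _ _).trans hZfrC
  have hQcard : (Zb m ∪ fr.erase cdrop).card = m + 2 := by
    rw [← hQ, Finset.card_erase_of_mem (hfrP hcd), hcardP]
    omega
  have hQne : ∃ c ∈ Zb m ∪ fr.erase cdrop, c ∉ Zb m := by
    refine ⟨c₁, Finset.mem_union_right _ (Finset.mem_erase.mpr ⟨hc₁ne, hc₁fr⟩),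
      Finset.disjoint_right.mp (Zb_disj_fr m) hc₁fr⟩
  have hW1 : thieleWinners ω (Zb m ∪ fr) V (m+2) = {(Zb m ∪ fr).erase cdrop} := by
    rw [show m + 2 = (Zb m ∪ fr).card - 1 from by omega]
    rw [winners_erase ω m Cand V K G hS1 hS2 hG0 (Zb m ∪ fr) Finset.subset_union_left hZfrC
      ⟨cdrop, hfrP hcd, hcdZ⟩]
    exact stage1 ω m Cand V K G hS1 hS2 hG0 hZfrC cdrop hcd hpair
  have hW2 : thieleWinners ω (Zb m ∪ fr.erase cdrop) V (m+1) = dropW m G (Zb m ∪ fr.erase cdrop) := by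
    rw [show m + 1 = (Zb m ∪ fr.erase cdrop).card - 1 from by omega]
    exact winners_erase ω m Cand V K G hS1 hS2 hG0 _ hQZ hQC hQne
  show {S | ∃ S₁ ∈ thieleWinners ω (Zb m ∪ fr) V (m+2),
      S ∈ msThiele ω (decList 1 (m+2-1)) S₁ V} = _
  rw [hW1]
  ext S
  simp only [Set.mem_setOf_eq, Set.mem_singleton_iff]
  constructor
  · rintro ⟨S₁, rfl, hS⟩
    rw [hQ] at hS
    obtain ⟨S₂, hS₂, hS'⟩ := hS
    rw [show (m+2-1 : ℕ) = m+1 from by omega] at hS₂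
    rw [hW2] at hS₂
    have : S = S₂ := hS'
    rw [this]
    exact hS₂
  · intro hS
    refine ⟨(Zb m ∪ fr).erase cdrop, rfl, ?_⟩
    rw [hQ]
    refine ⟨S, ?_, rfl⟩
    rw [show (m+2-1 : ℕ) = m+1 from by omega, hW2]
    exact hS

lemma msEval (j : ℕ) (hCand : Cand = Finset.range (m + j + 3))
    (hfull : ∀ c ∈ fr, G (fr.erase c) < G fr)
    (cdrop : ℕ) (hcd : cdrop ∈ fr)
    (hpair : ∀ c ∈ fr, c ≠ cdrop → G (fr.erase c) < G (fr.erase cdrop)) :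
    msThiele ω (decList (j+2) (m+2+j)) Cand V = dropW m G (Zb m ∪ fr.erase cdrop) := by
  have hZfrC : Zb m ∪ fr ⊆ Cand := by
    rw [hCand]
    intro x hx
    rw [Finset.mem_range]
    rcases Finset.mem_union.mp hx with h | h
    · have := mem_Zb.mp h
      omega
    · have := mem_fr.mp h
      omega
  have hcardC : Cand.card = m + 3 + j := by
    rw [hCand, Finset.card_range]
    omega
  rw [padding ω m Cand V K G hS1 hS2 hG0 hfull j Cand hZfrC (Finset.Subset.refl _) hcardC]
  exact coreEval ω m Cand V K G hS1 hS2 hG0 hZfrC cdrop hcd hpair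

end Generic

lemma omega_nonneg {ω : ℕ → ℝ} (hmono : Monotone ω) (h0 : ω 0 = 0) (j : ℕ) : 0 ≤ ω j :=
  h0 ▸ hmono (Nat.zero_le j)

lemma erase_union_inter_fr {m : ℕ} {Y : Finset ℕ} (hY : Y ⊆ fr) (c : ℕ) :
    ((Zb m ∪ Y).erase c) ∩ fr = Y.erase c := by
  ext x
  simp only [Finset.mem_inter, Finset.mem_erase, Finset.mem_union]
  constructor
  · rintro ⟨⟨hxc, hx | hx⟩, hxfr⟩
    · exact absurd hxfr (Finset.disjoint_left.mp (Zb_disj_fr m) hx)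
    · exact ⟨hxc, hx⟩
  · rintro ⟨hxc, hxY⟩
    exact ⟨⟨hxc, Or.inr hxY⟩, hY hxY⟩

noncomputable def Pb (m p b : ℕ) : Finset ℕ :=
  if h : p - 1 ≤ ((Zb m).erase b).card then (Finset.exists_subset_card_eq h).choose else ∅

lemma Pb_sub (m p b : ℕ) : Pb m p b ⊆ (Zb m).erase b := by
  rw [Pb]
  by_cases h : p - 1 ≤ ((Zb m).erase b).card
  · rw [dif_pos h]
    exact (Finset.exists_subset_card_eq h).choose_spec.1
  · rw [dif_neg h]
    exact Finset.empty_subset _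

lemma Pb_card {m p b : ℕ} (hb : b ∈ Zb m) (hpm : p ≤ m) : (Pb m p b).card = p - 1 := by
  have h : p - 1 ≤ ((Zb m).erase b).card := by
    rw [Finset.card_erase_of_mem hb, card_Zb]
    omega
  rw [Pb, dif_pos h]
  exact (Finset.exists_subset_card_eq h).choose_spec.2

lemma Pb_union_sub {m p b : ℕ} (hb : b ∈ Zb m) : Pb m p b ∪ {b} ⊆ Zb m := by
  intro x hx
  rcases Finset.mem_union.mp hx with h | h
  · exact (Finset.erase_subset _ _) (Pb_sub m p b h)
  · rw [Finset.mem_singleton.mp h]; exact hb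

lemma Pb_union_card {m p b : ℕ} (hb : b ∈ Zb m) (hp : 1 ≤ p) (hpm : p ≤ m) :
    (Pb m p b ∪ {b}).card = p := by
  rw [Finset.card_union_of_disjoint, Pb_card hb hpm, Finset.card_singleton]
  · omega
  · rw [Finset.disjoint_singleton_right]
    intro h
    exact (Finset.notMem_erase b (Zb m)) (Pb_sub m p b h)

noncomputable def forcing (m p N : ℕ) : List (Finset ℕ) :=
  (Zb m).toList.flatMap fun b => List.replicate N (Pb m p b ∪ {b})

lemma forcing_mem (m p N : ℕ) : ∀ A ∈ forcing m p N, A ⊆ Zb m := by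
  intro A hA
  rw [forcing, List.mem_flatMap] at hA
  obtain ⟨b, hb, hA⟩ := hA
  rw [List.mem_replicate] at hA
  rw [hA.2]
  exact Pb_union_sub (Finset.mem_toList.mp hb)

lemma score_forcing (ω : ℕ → ℝ) (m p N : ℕ) (S : Finset ℕ) :
    thieleScore ω (forcing m p N) S
      = ∑ b ∈ Zb m, (N : ℝ) * ω ((S ∩ (Pb m p b ∪ {b})).card) := by
  rw [forcing, score_flatMap]
  simp only [score_replicate]
  rw [Finset.sum_map_toList]

lemma score_forcing_base (ω : ℕ → ℝ) {m p : ℕ} (N : ℕ) (hp : 1 ≤ p) (hpm : p ≤ m)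
    {S : Finset ℕ} (hZS : Zb m ⊆ S) :
    thieleScore ω (forcing m p N) S = (m : ℝ) * ((N : ℝ) * ω p) := by
  rw [score_forcing]
  rw [Finset.sum_congr rfl (fun b hb => ?_), Finset.sum_const, card_Zb, nsmul_eq_mul]
  have h1 : S ∩ (Pb m p b ∪ {b}) = Pb m p b ∪ {b} :=
    Finset.inter_eq_right.mpr ((Pb_union_sub hb).trans hZS)
  rw [h1, Pb_union_card hb hp hpm]

lemma score_forcing_bd (ω : ℕ → ℝ) (hmono : Monotone ω) (h0 : ω 0 = 0)
    {m p : ℕ} (N : ℕ) (hp : 1 ≤ p) (hpm : p ≤ m) (hp0 : ω (p - 1) = 0)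
    {S : Finset ℕ} (hnZS : ¬ Zb m ⊆ S) :
    thieleScore ω (forcing m p N) S ≤ ((m : ℝ) - 1) * ((N : ℝ) * ω p) := by
  obtain ⟨b₀, hb₀Z, hb₀S⟩ := Finset.not_subset.mp hnZS
  rw [score_forcing, ← Finset.sum_erase_add _ _ hb₀Z]
  have h1 : (N : ℝ) * ω ((S ∩ (Pb m p b₀ ∪ {b₀})).card) ≤ 0 := by
    have hsub : S ∩ (Pb m p b₀ ∪ {b₀}) ⊆ Pb m p b₀ := by
      intro x hx
      obtain ⟨hxS, hx2⟩ := Finset.mem_inter.mp hx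
      rcases Finset.mem_union.mp hx2 with h | h
      · exact h
      · exact absurd (Finset.mem_singleton.mp h ▸ hxS) hb₀S
    have hcard : (S ∩ (Pb m p b₀ ∪ {b₀})).card ≤ p - 1 := by
      have := Finset.card_le_card hsub
      rw [Pb_card hb₀Z hpm] at this
      exact this
    have : ω ((S ∩ (Pb m p b₀ ∪ {b₀})).card) ≤ 0 := by
      calc ω _ ≤ ω (p-1) := hmono hcard
        _ = 0 := hp0
    have hN : (0:ℝ) ≤ N := Nat.cast_nonneg N
    nlinarith
  have h2 : ∑ b ∈ (Zb m).erase b₀, (N : ℝ) * ω ((S ∩ (Pb m p b ∪ {b})).card)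
      ≤ ((m : ℝ) - 1) * ((N : ℝ) * ω p) := by
    have hbd : ∀ b ∈ (Zb m).erase b₀,
        (N : ℝ) * ω ((S ∩ (Pb m p b ∪ {b})).card) ≤ (N : ℝ) * ω p := by
      intro b hb
      have hbZ : b ∈ Zb m := (Finset.erase_subset _ _) hb
      have hcard : (S ∩ (Pb m p b ∪ {b})).card ≤ p := by
        have h3 : (S ∩ (Pb m p b ∪ {b})).card ≤ (Pb m p b ∪ {b}).card :=
          Finset.card_le_card Finset.inter_subset_right
        rw [Pb_union_card hbZ hp hpm] at h3
        exact h3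
      have := hmono hcard
      have hN : (0:ℝ) ≤ N := Nat.cast_nonneg N
      nlinarith
    calc ∑ b ∈ (Zb m).erase b₀, (N : ℝ) * ω ((S ∩ (Pb m p b ∪ {b})).card)
        ≤ ∑ _b ∈ (Zb m).erase b₀, (N : ℝ) * ω p := Finset.sum_le_sum hbd
      _ = ((m : ℝ) - 1) * ((N : ℝ) * ω p) := by
          rw [Finset.sum_const, Finset.card_erase_of_mem hb₀Z, card_Zb, nsmul_eq_mul]
          have : 1 ≤ m := le_trans hp hpm
          push_cast [Nat.cast_sub this]
          ring
  linarith

/-- non-forcing ballots given by blocks `(count, base-part, free-part)` -/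
def nfList (bl : List (ℕ × Finset ℕ × Finset ℕ)) : List (Finset ℕ) :=
  bl.flatMap fun q => List.replicate q.1 (q.2.1 ∪ q.2.2)

noncomputable def Gfun (ω : ℕ → ℝ) (bl : List (ℕ × Finset ℕ × Finset ℕ))
    (X : Finset ℕ) : ℝ :=
  (bl.map fun q => (q.1 : ℝ) * ω (q.2.1.card + (X ∩ q.2.2).card)).sum

lemma nf_mem (m : ℕ) (bl : List (ℕ × Finset ℕ × Finset ℕ))
    (hbl : ∀ q ∈ bl, q.2.1 ⊆ Zb m ∧ q.2.2 ⊆ fr) :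
    ∀ A ∈ nfList bl, A ⊆ Zb m ∪ fr := by
  intro A hA
  rw [nfList, List.mem_flatMap] at hA
  obtain ⟨q, hq, hA⟩ := hA
  rw [List.mem_replicate] at hA
  rw [hA.2]
  exact Finset.union_subset ((hbl q hq).1.trans Finset.subset_union_left)
    ((hbl q hq).2.trans Finset.subset_union_right)

lemma score_nf_eq (ω : ℕ → ℝ) (m : ℕ) (bl : List (ℕ × Finset ℕ × Finset ℕ))
    (hbl : ∀ q ∈ bl, q.2.1 ⊆ Zb m ∧ q.2.2 ⊆ fr)
    {S : Finset ℕ} (hZS : Zb m ⊆ S) :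
    thieleScore ω (nfList bl) S = Gfun ω bl (S ∩ fr) := by
  induction bl with
  | nil => simp [nfList, thieleScore, Gfun]
  | cons q bl ih =>
    rw [nfList, List.flatMap_cons, score_append, ← nfList,
      ih (fun q' hq' => hbl q' (List.mem_cons_of_mem _ hq')), score_replicate]
    rw [show Gfun ω (q :: bl) (S ∩ fr)
        = (q.1 : ℝ) * ω (q.2.1.card + ((S ∩ fr) ∩ q.2.2).card) + Gfun ω bl (S ∩ fr) from by
      simp [Gfun]]
    congr 3
    have hB : q.2.1 ⊆ Zb m := (hbl q (List.mem_cons_self)).1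
    have hX : q.2.2 ⊆ fr := (hbl q (List.mem_cons_self)).2
    have h1 : S ∩ (q.2.1 ∪ q.2.2) = q.2.1 ∪ ((S ∩ fr) ∩ q.2.2) := by
      ext x
      simp only [Finset.mem_inter, Finset.mem_union]
      constructor
      · rintro ⟨hxS, hx | hx⟩
        · exact Or.inl hx
        · exact Or.inr ⟨⟨hxS, hX hx⟩, hx⟩
      · rintro (hx | ⟨⟨hxS, _⟩, hx⟩)
        · exact ⟨hZS (hB hx), Or.inl hx⟩
        · exact ⟨hxS, Or.inr hx⟩
    rw [h1, Finset.card_union_of_disjoint]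
    exact Finset.disjoint_of_subset_left hB (Finset.disjoint_of_subset_right
      (Finset.inter_subset_left.trans Finset.inter_subset_right) (Zb_disj_fr m))

lemma score_nf_bd (ω : ℕ → ℝ) (hmono : Monotone ω) (h0 : ω 0 = 0) (m : ℕ)
    (bl : List (ℕ × Finset ℕ × Finset ℕ))
    (hbl : ∀ q ∈ bl, q.2.1 ⊆ Zb m ∧ q.2.2 ⊆ fr) (S : Finset ℕ) :
    thieleScore ω (nfList bl) S ≤ (bl.map fun q => (q.1:ℝ)).sum * ω (m+3) := by
  induction bl with
  | nil => simp [nfList, thieleScore]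
  | cons q bl ih =>
    rw [nfList, List.flatMap_cons, score_append, ← nfList, List.map_cons, List.sum_cons,
      score_replicate, add_mul]
    have h2 := ih (fun q' hq' => hbl q' (List.mem_cons_of_mem _ hq'))
    have h1 : (q.1 : ℝ) * ω ((S ∩ (q.2.1 ∪ q.2.2)).card) ≤ (q.1 : ℝ) * ω (m+3) := by
      have hB : q.2.1 ⊆ Zb m := (hbl q (List.mem_cons_self)).1
      have hX : q.2.2 ⊆ fr := (hbl q (List.mem_cons_self)).2
      have hcard : (S ∩ (q.2.1 ∪ q.2.2)).card ≤ m + 3 := by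
        calc (S ∩ (q.2.1 ∪ q.2.2)).card ≤ (q.2.1 ∪ q.2.2).card :=
              Finset.card_le_card Finset.inter_subset_right
          _ ≤ q.2.1.card + q.2.2.card := Finset.card_union_le _ _
          _ ≤ m + 3 := by
              have := Finset.card_le_card hB
              have := Finset.card_le_card hX
              rw [card_Zb] at *
              have hf : fr.card = 3 := card_fr
              omega
      exact mul_le_mul_of_nonneg_left (hmono hcard) (Nat.cast_nonneg _)
    linarith

lemma Gfun_nonneg (ω : ℕ → ℝ) (hmono : Monotone ω) (h0 : ω 0 = 0)
    (bl : List (ℕ × Finset ℕ × Finset ℕ)) (X : Finset ℕ) : 0 ≤ Gfun ω bl X := by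
  apply List.sum_nonneg
  intro a ha
  rw [List.mem_map] at ha
  obtain ⟨q, _, rfl⟩ := ha
  exact mul_nonneg (Nat.cast_nonneg _) (omega_nonneg hmono h0 _)

lemma construction (ω : ℕ → ℝ) (hmono : Monotone ω) (h0 : ω 0 = 0)
    (t : ℕ) (ht : 2 ≤ t) (m p N : ℕ) (hp : 1 ≤ p) (hpm : p ≤ m)
    (hwp : 0 < ω p) (hp0 : ω (p - 1) = 0)
    (bl₁ bl₂ : List (ℕ × Finset ℕ × Finset ℕ))
    (hbl₁ : ∀ q ∈ bl₁, q.2.1 ⊆ Zb m ∧ q.2.2 ⊆ fr)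
    (hbl₂ : ∀ q ∈ bl₂, q.2.1 ⊆ Zb m ∧ q.2.2 ⊆ fr)
    (hN₁ : (bl₁.map fun q => (q.1:ℝ)).sum * ω (m+3) < (N : ℝ) * ω p)
    (hN₂ : (bl₂.map fun q => (q.1:ℝ)).sum * ω (m+3) < (N : ℝ) * ω p)
    (hfull₁ : ∀ c ∈ fr, Gfun ω bl₁ (fr.erase c) < Gfun ω bl₁ fr)
    (hfull₂ : ∀ c ∈ fr, Gfun ω bl₂ (fr.erase c) < Gfun ω bl₂ fr)
    (hp₁a : Gfun ω bl₁ {0,2} < Gfun ω bl₁ {0,1})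
    (hp₁b : Gfun ω bl₁ {1,2} < Gfun ω bl₁ {0,1})
    (hf₁ : Gfun ω bl₁ {1} < Gfun ω bl₁ {0})
    (hp₂a : Gfun ω bl₂ {0,1} < Gfun ω bl₂ {0,2})
    (hp₂b : Gfun ω bl₂ {1,2} < Gfun ω bl₂ {0,2})
    (hf₂ : Gfun ω bl₂ {2} < Gfun ω bl₂ {0})
    (hca : Gfun ω bl₁ {0,1} + Gfun ω bl₂ {0,1} < Gfun ω bl₁ {1,2} + Gfun ω bl₂ {1,2})
    (hcb : Gfun ω bl₁ {0,2} + Gfun ω bl₂ {0,2} < Gfun ω bl₁ {1,2} + Gfun ω bl₂ {1,2}) :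
    ¬ MSThieleConsistent ω t := by
  intro hMS
  obtain ⟨j, rfl⟩ : ∃ j, t = j + 2 := ⟨t - 2, by omega⟩
  set Cand : Finset ℕ := Finset.range (m + j + 3) with hCand
  have hZfrC : Zb m ∪ fr ⊆ Cand := by
    intro x hx
    rw [hCand, Finset.mem_range]
    rcases Finset.mem_union.mp hx with h | h
    · have := mem_Zb.mp h; omega
    · have := mem_fr.mp h; omega
  set V₁ : List (Finset ℕ) := forcing m p N ++ nfList bl₁ with hV₁
  set V₂ : List (Finset ℕ) := forcing m p N ++ nfList bl₂ with hV₂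
  set K : ℝ := (m : ℝ) * ((N : ℝ) * ω p) with hK
  set G₁ : Finset ℕ → ℝ := Gfun ω bl₁ with hG₁
  set G₂ : Finset ℕ → ℝ := Gfun ω bl₂ with hG₂
  have hm1 : 1 ≤ m := le_trans hp hpm
  -- score formulas
  have hS1₁ : ∀ S ⊆ Cand, Zb m ⊆ S → thieleScore ω V₁ S = K + G₁ (S ∩ fr) := by
    intro S _ hZS
    rw [hV₁, score_append, score_forcing_base ω N hp hpm hZS, score_nf_eq ω m bl₁ hbl₁ hZS]
  have hS1₂ : ∀ S ⊆ Cand, Zb m ⊆ S → thieleScore ω V₂ S = K + G₂ (S ∩ fr) := by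
    intro S _ hZS
    rw [hV₂, score_append, score_forcing_base ω N hp hpm hZS, score_nf_eq ω m bl₂ hbl₂ hZS]
  have hS2₁ : ∀ S ⊆ Cand, ¬ Zb m ⊆ S → thieleScore ω V₁ S < K := by
    intro S _ hnZS
    rw [hV₁, score_append]
    have h1 := score_forcing_bd ω hmono h0 N hp hpm hp0 hnZS
    have h2 := score_nf_bd ω hmono h0 m bl₁ hbl₁ S
    rw [hK]
    linarith
  have hS2₂ : ∀ S ⊆ Cand, ¬ Zb m ⊆ S → thieleScore ω V₂ S < K := by
    intro S _ hnZS
    rw [hV₂, score_append]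
    have h1 := score_forcing_bd ω hmono h0 N hp hpm hp0 hnZS
    have h2 := score_nf_bd ω hmono h0 m bl₂ hbl₂ S
    rw [hK]
    linarith
  have hG0₁ : ∀ X : Finset ℕ, 0 ≤ G₁ X := fun X => Gfun_nonneg ω hmono h0 bl₁ X
  have hG0₂ : ∀ X : Finset ℕ, 0 ≤ G₂ X := fun X => Gfun_nonneg ω hmono h0 bl₂ X
  -- combined
  set Gc : Finset ℕ → ℝ := fun X => G₁ X + G₂ X with hGc
  have hS1c : ∀ S ⊆ Cand, Zb m ⊆ S → thieleScore ω (V₁ ++ V₂) S = (K + K) + Gc (S ∩ fr) := by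
    intro S hSC hZS
    rw [score_append, hS1₁ S hSC hZS, hS1₂ S hSC hZS, hGc]
    ring
  have hS2c : ∀ S ⊆ Cand, ¬ Zb m ⊆ S → thieleScore ω (V₁ ++ V₂) S < K + K := by
    intro S hSC hnZS
    rw [score_append]
    have := hS2₁ S hSC hnZS
    have := hS2₂ S hSC hnZS
    linarith
  have hG0c : ∀ X : Finset ℕ, 0 ≤ Gc X := fun X => add_nonneg (hG0₁ X) (hG0₂ X)
  -- erase-facts on fr
  have he0 : fr.erase 0 = ({1,2} : Finset ℕ) := by decide
  have he1 : fr.erase 1 = ({0,2} : Finset ℕ) := by decide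
  have he2 : fr.erase 2 = ({0,1} : Finset ℕ) := by decide
  -- stage-1 tie-breaking hypotheses
  have hpair₁ : ∀ c ∈ fr, c ≠ 2 → G₁ (fr.erase c) < G₁ (fr.erase 2) := by
    intro c hc hne
    rcases mem_fr.mp hc with rfl | rfl | rfl
    · rw [he0, he2]; exact hp₁b
    · rw [he1, he2]; exact hp₁a
    · exact absurd rfl hne
  have hpair₂ : ∀ c ∈ fr, c ≠ 1 → G₂ (fr.erase c) < G₂ (fr.erase 1) := by
    intro c hc hne
    rcases mem_fr.mp hc with rfl | rfl | rfl
    · rw [he0, he1]; exact hp₂b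
    · exact absurd rfl hne
    · rw [he2, he1]; exact hp₂a
  have hpairc : ∀ c ∈ fr, c ≠ 0 → Gc (fr.erase c) < Gc (fr.erase 0) := by
    intro c hc hne
    rcases mem_fr.mp hc with rfl | rfl | rfl
    · exact absurd rfl hne
    · rw [he1, he0, hGc]; exact hcb
    · rw [he2, he0, hGc]; exact hca
  -- the three multistage outcomes
  have hms₁ : msThiele ω (decList (j+2) (m+2+j)) Cand V₁ = dropW m G₁ (Zb m ∪ fr.erase 2) :=
    msEval ω m Cand V₁ K G₁ hS1₁ hS2₁ hG0₁ j rfl hfull₁ 2 (by decide) hpair₁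
  have hms₂ : msThiele ω (decList (j+2) (m+2+j)) Cand V₂ = dropW m G₂ (Zb m ∪ fr.erase 1) :=
    msEval ω m Cand V₂ K G₂ hS1₂ hS2₂ hG0₂ j rfl hfull₂ 1 (by decide) hpair₂
  have hmsc : msThiele ω (decList (j+2) (m+2+j)) Cand (V₁ ++ V₂)
      = dropW m Gc (Zb m ∪ fr.erase 0) := by
    have hfullc : ∀ c ∈ fr, Gc (fr.erase c) < Gc fr := fun c hc =>
      add_lt_add (hfull₁ c hc) (hfull₂ c hc)
    exact msEval ω m Cand (V₁ ++ V₂) (K + K) Gc hS1c hS2c hG0c j rfl hfullc 0 (by decide) hpairc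
  -- the common winner
  have hwin₁ : (Zb m ∪ {0} : Finset ℕ) ∈ dropW m G₁ (Zb m ∪ fr.erase 2) := by
    rw [he2]
    refine ⟨1, Finset.mem_union_right _ (by decide), ?_, ?_, ?_⟩
    · rw [mem_Zb]; omega
    · ext x
      simp only [Finset.mem_union, Finset.mem_erase, Finset.mem_singleton,
        Finset.mem_insert, mem_Zb]
      omega
    · intro c' hc' hc'Z
      have hcc : c' = 0 ∨ c' = 1 := by
        rcases Finset.mem_union.mp hc' with h | h
        · exact absurd h hc'Z
        · rcases Finset.mem_insert.mp h with h | h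
          · exact Or.inl h
          · exact Or.inr (Finset.mem_singleton.mp h)
      rw [erase_union_inter_fr (by decide) c', erase_union_inter_fr (by decide) 1]
      rcases hcc with rfl | rfl
      · rw [show ({0,1} : Finset ℕ).erase 0 = {1} from by decide,
          show ({0,1} : Finset ℕ).erase 1 = {0} from by decide]
        exact le_of_lt hf₁
      · exact le_refl _
  have hwin₂ : (Zb m ∪ {0} : Finset ℕ) ∈ dropW m G₂ (Zb m ∪ fr.erase 1) := by
    rw [he1]
    refine ⟨2, Finset.mem_union_right _ (by decide), ?_, ?_, ?_⟩
    · rw [mem_Zb]; omega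
    · ext x
      simp only [Finset.mem_union, Finset.mem_erase, Finset.mem_singleton,
        Finset.mem_insert, mem_Zb]
      omega
    · intro c' hc' hc'Z
      have hcc : c' = 0 ∨ c' = 2 := by
        rcases Finset.mem_union.mp hc' with h | h
        · exact absurd h hc'Z
        · rcases Finset.mem_insert.mp h with h | h
          · exact Or.inl h
          · exact Or.inr (Finset.mem_singleton.mp h)
      rw [erase_union_inter_fr (by decide) c', erase_union_inter_fr (by decide) 2]
      rcases hcc with rfl | rfl
      · rw [show ({0,2} : Finset ℕ).erase 0 = {2} from by decide,
          show ({0,2} : Finset ℕ).erase 2 = {0} from by decide]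
        exact le_of_lt hf₂
      · exact le_refl _
  -- ... but it is not a winner of the combined election
  have hnotc : (Zb m ∪ {0} : Finset ℕ) ∉ dropW m Gc (Zb m ∪ fr.erase 0) := by
    rw [he0]
    rintro ⟨c, hcP, hcZ, heq, -⟩
    have h00 : (0 : ℕ) ∈ Zb m ∪ {0} := Finset.mem_union_right _ (Finset.mem_singleton_self 0)
    rw [heq] at h00
    have h01 := Finset.mem_of_mem_erase h00
    rcases Finset.mem_union.mp h01 with h | h
    · rw [mem_Zb] at h; omega
    · rcases Finset.mem_insert.mp h with h | h
      · exact absurd h (by decide)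
      · exact absurd (Finset.mem_singleton.mp h) (by decide)
  -- apply the consistency assumption
  have hsub₁ : ∀ A ∈ V₁, A ⊆ Cand := by
    intro A hA
    rw [hV₁, List.mem_append] at hA
    rcases hA with h | h
    · exact ((forcing_mem m p N A h).trans Finset.subset_union_left).trans hZfrC
    · exact (nf_mem m bl₁ hbl₁ A h).trans hZfrC
  have hsub₂ : ∀ A ∈ V₂, A ⊆ Cand := by
    intro A hA
    rw [hV₂, List.mem_append] at hA
    rcases hA with h | h
    · exact ((forcing_mem m p N A h).trans Finset.subset_union_left).trans hZfrC
    · exact (nf_mem m bl₂ hbl₂ A h).trans hZfrC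
  have hchain : List.Chain (· > ·) Cand.card (decList (j+2) (m+2+j)) := by
    have := decList_chain (j+2) (m+2+j) (by omega)
    rw [hCand, Finset.card_range]
    rw [show m + j + 3 = m+2+j+1 from by omega]
    exact this
  have hks1 : ∀ k ∈ decList (j+2) (m+2+j), 1 ≤ k := by
    intro k hk
    have := decList_mem_ge (j+2) (m+2+j) (by omega) k hk
    omega
  have heq := hMS ℕ Cand V₁ V₂ hsub₁ hsub₂ (decList (j+2) (m+2+j))
    (by rw [decList]; exact List.cons_ne_nil _ _)
    (by rw [decList_length])
    hchain hks1
    (by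
      rw [hms₁, hms₂]
      exact ⟨Zb m ∪ {0}, hwin₁, hwin₂⟩)
  rw [hmsc, hms₁, hms₂] at heq
  exact hnotc (heq ▸ Set.mem_inter hwin₁ hwin₂)

lemma exists_nat_mul_gt {r s : ℝ} (hs : 0 < s) : ∃ n : ℕ, r < n * s := by
  obtain ⟨n, hn⟩ := exists_nat_gt (r / s)
  exact ⟨n, by rwa [div_lt_iff₀ hs] at hn⟩

lemma exists_nat_mul_between {L U w : ℝ} (hL : 0 ≤ L) (hw : 0 < w) (hLU : L + w < U) :
    ∃ n : ℕ, L < n * w ∧ n * w < U := by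
  refine ⟨Nat.floor (L / w) + 1, ?_, ?_⟩
  · have h1 : L / w < Nat.floor (L / w) + 1 := Nat.lt_floor_add_one _
    have h2 : (L / w) * w < ((Nat.floor (L / w) : ℝ) + 1) * w :=
      mul_lt_mul_of_pos_right h1 hw
    rw [div_mul_cancel₀ L (ne_of_gt hw)] at h2
    push_cast
    linarith
  · have h2 : (Nat.floor (L / w) : ℝ) ≤ L / w := Nat.floor_le (by positivity)
    have h3 : (Nat.floor (L/w) : ℝ) * w ≤ (L / w) * w :=
      mul_le_mul_of_nonneg_right h2 (le_of_lt hw)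
    rw [div_mul_cancel₀ L (ne_of_gt hw)] at h3
    push_cast
    linarith

lemma blsum_nonneg (bl : List (ℕ × Finset ℕ × Finset ℕ)) :
    0 ≤ (bl.map fun q => (q.1:ℝ)).sum := by
  apply List.sum_nonneg
  intro a ha
  rw [List.mem_map] at ha
  obtain ⟨q, _, rfl⟩ := ha
  exact Nat.cast_nonneg _

set_option maxHeartbeats 2000000 in
theorem main (t : ℕ) (ht : 2 ≤ t) (ω : ℕ → ℝ)
    (hmono : Monotone ω) (h0 : ω 0 = 0)
    (hi : ∃ i₀ : ℕ, 2 ≤ i₀ ∧ ω (i₀ - 1) - ω (i₀ - 2) ≠ ω i₀ - ω (i₀ - 1)) :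
    ¬ MSThieleConsistent ω t := by
  obtain ⟨i₀, hi₀2, hine⟩ := hi
  set i₂ := i₀ - 2 with hi₂
  set k0 := ω i₂ with hk0
  set u1 := ω (i₀ - 1) with hu1
  set u2 := ω i₀ with hu2
  have hii1 : ω (i₂ + 1) = u1 := by rw [hu1]; congr 1; omega
  have hii2 : ω (i₂ + 2) = u2 := by rw [hu2]; congr 1; omega
  have hd10 : k0 ≤ u1 := hmono (by omega)
  have hd20 : u1 ≤ u2 := hmono (by omega)
  have hk00 : 0 ≤ k0 := omega_nonneg hmono h0 _
  have hωi₀ : 0 < u2 := by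
    rcases lt_or_gt_of_ne hine with hc | hc
    · linarith
    · linarith
  have hex : ∃ n, 0 < ω n := ⟨i₀, by rw [← hu2]; exact hωi₀⟩
  set p := Nat.find hex with hpdef
  have hwp : 0 < ω p := Nat.find_spec hex
  have hp1 : 1 ≤ p := by
    rcases Nat.eq_zero_or_pos p with h | h
    · rw [h, h0] at hwp
      exact absurd hwp (lt_irrefl 0)
    · exact h
  have hp0 : ω (p - 1) = 0 := by
    have h1 : ¬ 0 < ω (p - 1) := Nat.find_min hex (by omega)
    have h2 := omega_nonneg hmono h0 (p - 1)
    linarith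
  set m := max p i₂ with hm
  have hpm : p ≤ m := le_max_left _ _
  have hi₂m : i₂ ≤ m := le_max_right _ _
  obtain ⟨Q, hQsub, hQcard⟩ := Finset.exists_subset_card_eq
    (show p - 1 ≤ (Zb m).card by rw [card_Zb]; omega)
  obtain ⟨D, hDsub, hDcard⟩ := Finset.exists_subset_card_eq
    (show i₂ ≤ (Zb m).card by rw [card_Zb]; omega)
  set W := ω p with hW
  have hωq1 : ω (p - 1 + 1) = W := by rw [hW]; congr 1; omega
  have hω3 := omega_nonneg hmono h0 (m + 3)
  rcases lt_or_gt_of_ne hine with hc | hc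
  · -- Case 1 : d₁ < d₂
    have he2pos : 0 < u2 - u1 := by linarith
    obtain ⟨Dd, hDd⟩ := exists_nat_mul_gt (r := 2 * W) he2pos
    obtain ⟨Cc, hCc⟩ := exists_nat_mul_gt (r := W + Dd * (u2 - u1))
      (show 0 < (u2 - u1) - (u1 - k0) by linarith)
    have hCc2 : (0:ℝ) ≤ Cc * (u2 - u1) := mul_nonneg (Nat.cast_nonneg _) (le_of_lt he2pos)
    have hCc1 : (0:ℝ) ≤ Cc * (u1 - k0) := mul_nonneg (Nat.cast_nonneg _) (by linarith)
    obtain ⟨A', hA'lo, hA'hi⟩ := exists_nat_mul_between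
      (L := max ((Cc:ℝ) * (u1 - k0)) ((Cc:ℝ) * (u2 - u1) - Dd * (u2 - u1)))
      (U := (Cc:ℝ) * (u2 - u1) - Dd * (u2 - u1) / 2)
      (le_max_of_le_left hCc1) hwp
      (by
        rcases max_cases ((Cc:ℝ) * (u1 - k0)) ((Cc:ℝ) * (u2 - u1) - Dd * (u2 - u1)) with
          ⟨hmx, _⟩ | ⟨hmx, _⟩ <;> rw [hmx] <;> linarith [hDd, hCc])
    have hA'1 : (Cc:ℝ) * (u1 - k0) < A' * W :=
      lt_of_le_of_lt (le_max_left _ _) hA'lo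
    have hA'2 : (Cc:ℝ) * (u2 - u1) - Dd * (u2 - u1) < A' * W :=
      lt_of_le_of_lt (le_max_right _ _) hA'lo
    set A := A' + 1 with hA
    have hAc : (A:ℝ) = (A':ℝ) + 1 := by rw [hA]; push_cast; ring
    set bl₁ : List (ℕ × Finset ℕ × Finset ℕ) :=
      [(A, Q, {0}), (1, Q, {1}), (1, Q, {2}), (Cc, D, {1,2}), (Dd, D, {0,1})] with hbl₁def
    set bl₂ : List (ℕ × Finset ℕ × Finset ℕ) :=
      [(A, Q, {0}), (1, Q, {1}), (1, Q, {2}), (Cc, D, {1,2}), (Dd, D, {0,2})] with hbl₂def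
    have hbl₁ : ∀ q ∈ bl₁, q.2.1 ⊆ Zb m ∧ q.2.2 ⊆ fr := by
      intro q hq
      rw [hbl₁def] at hq
      simp only [List.mem_cons, List.not_mem_nil, or_false] at hq
      rcases hq with rfl|rfl|rfl|rfl|rfl
      exacts [⟨hQsub, show ({0} : Finset ℕ) ⊆ fr by decide⟩,
        ⟨hQsub, show ({1} : Finset ℕ) ⊆ fr by decide⟩,
        ⟨hQsub, show ({2} : Finset ℕ) ⊆ fr by decide⟩,
        ⟨hDsub, show ({1,2} : Finset ℕ) ⊆ fr by decide⟩,
        ⟨hDsub, show ({0,1} : Finset ℕ) ⊆ fr by decide⟩]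
    have hbl₂ : ∀ q ∈ bl₂, q.2.1 ⊆ Zb m ∧ q.2.2 ⊆ fr := by
      intro q hq
      rw [hbl₂def] at hq
      simp only [List.mem_cons, List.not_mem_nil, or_false] at hq
      rcases hq with rfl|rfl|rfl|rfl|rfl
      exacts [⟨hQsub, show ({0} : Finset ℕ) ⊆ fr by decide⟩,
        ⟨hQsub, show ({1} : Finset ℕ) ⊆ fr by decide⟩,
        ⟨hQsub, show ({2} : Finset ℕ) ⊆ fr by decide⟩,
        ⟨hDsub, show ({1,2} : Finset ℕ) ⊆ fr by decide⟩,
        ⟨hDsub, show ({0,2} : Finset ℕ) ⊆ fr by decide⟩]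
    have hs₁ : (bl₁.map fun q => (q.1:ℝ)).sum = (A:ℝ) + (Cc:ℝ) + (Dd:ℝ) + 2 := by
      rw [hbl₁def]
      simp only [List.map_cons, List.map_nil, List.sum_cons, List.sum_nil]
      push_cast
      ring
    have hs₂ : (bl₂.map fun q => (q.1:ℝ)).sum = (A:ℝ) + (Cc:ℝ) + (Dd:ℝ) + 2 := by
      rw [hbl₂def]
      simp only [List.map_cons, List.map_nil, List.sum_cons, List.sum_nil]
      push_cast
      ring
    obtain ⟨N, hN⟩ := exists_nat_mul_gt
      (r := (2 * ((A:ℝ) + (Cc:ℝ) + (Dd:ℝ) + 2)) * ω (m+3)) hwp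
    have hss : (0:ℝ) ≤ ((A:ℝ) + (Cc:ℝ) + (Dd:ℝ) + 2) * ω (m+3) :=
      mul_nonneg (by positivity) hω3
    have hN₁ : (bl₁.map fun q => (q.1:ℝ)).sum * ω (m+3) < (N:ℝ) * ω p := by
      rw [hs₁]; linarith
    have hN₂ : (bl₂.map fun q => (q.1:ℝ)).sum * ω (m+3) < (N:ℝ) * ω p := by
      rw [hs₂]; linarith
    have E1 : ∀ X : Finset ℕ, Gfun ω bl₁ X
        = (A:ℝ) * ω (p - 1 + (X ∩ {0}).card) + ω (p - 1 + (X ∩ {1}).card)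
          + ω (p - 1 + (X ∩ {2}).card) + (Cc:ℝ) * ω (i₂ + (X ∩ {1,2}).card)
          + (Dd:ℝ) * ω (i₂ + (X ∩ {0,1}).card) := by
      intro X
      rw [hbl₁def]
      simp only [Gfun, List.map_cons, List.map_nil, List.sum_cons, List.sum_nil,
        hQcard, hDcard]
      push_cast
      ring
    have E2 : ∀ X : Finset ℕ, Gfun ω bl₂ X
        = (A:ℝ) * ω (p - 1 + (X ∩ {0}).card) + ω (p - 1 + (X ∩ {1}).card)
          + ω (p - 1 + (X ∩ {2}).card) + (Cc:ℝ) * ω (i₂ + (X ∩ {1,2}).card)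
          + (Dd:ℝ) * ω (i₂ + (X ∩ {0,2}).card) := by
      intro X
      rw [hbl₂def]
      simp only [Gfun, List.map_cons, List.map_nil, List.sum_cons, List.sum_nil,
        hQcard, hDcard]
      push_cast
      ring
    -- values of G₁
    have v1f : Gfun ω bl₁ fr = A * W + W + W + Cc * u2 + Dd * u2 := by
      rw [E1]; norm_num [fr, hωq1, hii1, hii2]
    have v101 : Gfun ω bl₁ {0,1} = A * W + W + Cc * u1 + Dd * u2 := by
      rw [E1]; norm_num [hωq1, hii1, hii2, hp0]
    have v102 : Gfun ω bl₁ {0,2} = A * W + W + Cc * u1 + Dd * u1 := by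
      rw [E1]; norm_num [hωq1, hii1, hii2, hp0]
    have v112 : Gfun ω bl₁ {1,2} = W + W + Cc * u2 + Dd * u1 := by
      rw [E1]; norm_num [hωq1, hii1, hii2, hp0]
    have v10 : Gfun ω bl₁ {0} = A * W + Cc * k0 + Dd * u1 := by
      rw [E1]; norm_num [hωq1, hii1, hii2, hp0, hk0]
    have v11 : Gfun ω bl₁ {1} = W + Cc * u1 + Dd * u1 := by
      rw [E1]; norm_num [hωq1, hii1, hii2, hp0]
    -- values of G₂
    have v2f : Gfun ω bl₂ fr = A * W + W + W + Cc * u2 + Dd * u2 := by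
      rw [E2]; norm_num [fr, hωq1, hii1, hii2]
    have v201 : Gfun ω bl₂ {0,1} = A * W + W + Cc * u1 + Dd * u1 := by
      rw [E2]; norm_num [hωq1, hii1, hii2, hp0]
    have v202 : Gfun ω bl₂ {0,2} = A * W + W + Cc * u1 + Dd * u2 := by
      rw [E2]; norm_num [hωq1, hii1, hii2, hp0]
    have v212 : Gfun ω bl₂ {1,2} = W + W + Cc * u2 + Dd * u1 := by
      rw [E2]; norm_num [hωq1, hii1, hii2, hp0]
    have v20 : Gfun ω bl₂ {0} = A * W + Cc * k0 + Dd * u1 := by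
      rw [E2]; norm_num [hωq1, hii1, hii2, hp0, hk0]
    have v22 : Gfun ω bl₂ {2} = W + Cc * u1 + Dd * u1 := by
      rw [E2]; norm_num [hωq1, hii1, hii2, hp0]
    have he0 : fr.erase 0 = ({1,2} : Finset ℕ) := by decide
    have he1 : fr.erase 1 = ({0,2} : Finset ℕ) := by decide
    have he2 : fr.erase 2 = ({0,1} : Finset ℕ) := by decide
    have hDd2 : (0:ℝ) < Dd * (u2 - u1) := by linarith [hDd, hwp]
    have hAW : (A:ℝ) * W = (A':ℝ) * W + W := by rw [hAc]; ring
    have hA'W0 : (0:ℝ) ≤ (A':ℝ) * W := mul_nonneg (Nat.cast_nonneg _) (le_of_lt hwp)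
    refine construction ω hmono h0 t ht m p N hp1 hpm hwp hp0 bl₁ bl₂ hbl₁ hbl₂ hN₁ hN₂
      ?_ ?_ ?_ ?_ ?_ ?_ ?_ ?_ ?_ ?_
    · intro c hcf
      rcases mem_fr.mp hcf with rfl | rfl | rfl
      · rw [he0, v112, v1f]; linarith [hAW, hA'W0, hA'1, hA'2, hA'hi, hDd2, hCc1, hCc2, hwp, hd10, hd20, hk00]
      · rw [he1, v102, v1f]; linarith [hAW, hA'W0, hA'1, hA'2, hA'hi, hDd2, hCc1, hCc2, hwp, hd10, hd20, hk00]
      · rw [he2, v101, v1f]; linarith [hAW, hA'W0, hA'1, hA'2, hA'hi, hDd2, hCc1, hCc2, hwp, hd10, hd20, hk00]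
    · intro c hcf
      rcases mem_fr.mp hcf with rfl | rfl | rfl
      · rw [he0, v212, v2f]; linarith [hAW, hA'W0, hA'1, hA'2, hA'hi, hDd2, hCc1, hCc2, hwp, hd10, hd20, hk00]
      · rw [he1, v202, v2f]; linarith [hAW, hA'W0, hA'1, hA'2, hA'hi, hDd2, hCc1, hCc2, hwp, hd10, hd20, hk00]
      · rw [he2, v201, v2f]; linarith [hAW, hA'W0, hA'1, hA'2, hA'hi, hDd2, hCc1, hCc2, hwp, hd10, hd20, hk00]
    · rw [v102, v101]; linarith [hAW, hA'W0, hA'1, hA'2, hA'hi, hDd2, hCc1, hCc2, hwp, hd10, hd20, hk00]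
    · rw [v112, v101]; linarith [hAW, hA'W0, hA'1, hA'2, hA'hi, hDd2, hCc1, hCc2, hwp, hd10, hd20, hk00]
    · rw [v11, v10]; linarith [hAW, hA'W0, hA'1, hA'2, hA'hi, hDd2, hCc1, hCc2, hwp, hd10, hd20, hk00]
    · rw [v201, v202]; linarith [hAW, hA'W0, hA'1, hA'2, hA'hi, hDd2, hCc1, hCc2, hwp, hd10, hd20, hk00]
    · rw [v212, v202]; linarith [hAW, hA'W0, hA'1, hA'2, hA'hi, hDd2, hCc1, hCc2, hwp, hd10, hd20, hk00]
    · rw [v22, v20]; linarith [hAW, hA'W0, hA'1, hA'2, hA'hi, hDd2, hCc1, hCc2, hwp, hd10, hd20, hk00]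
    · rw [v101, v201, v112, v212]; linarith [hAW, hA'W0, hA'1, hA'2, hA'hi, hDd2, hCc1, hCc2, hwp, hd10, hd20, hk00]
    · rw [v102, v202, v112, v212]; linarith [hAW, hA'W0, hA'1, hA'2, hA'hi, hDd2, hCc1, hCc2, hwp, hd10, hd20, hk00]
  · -- Case 2 : d₂ < d₁
    have hd1pos : 0 < u1 - k0 := by linarith
    obtain ⟨g, hg⟩ := exists_nat_mul_gt (r := 4 * (u1 - k0))
      (show 0 < (u1 - k0) - (u2 - u1) by linarith)
    have hg1 : (0:ℝ) ≤ g * (u1 - k0) := mul_nonneg (Nat.cast_nonneg _) (by linarith)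
    have hg2 : (0:ℝ) ≤ g * (u2 - u1) := mul_nonneg (Nat.cast_nonneg _) (by linarith)
    set bl₁ : List (ℕ × Finset ℕ × Finset ℕ) :=
      [(1, Q, {0}), (1, Q, {1}), (1, Q, {2}), (2, D, {0}), (g, D, {1}),
        (1, D, {1,2}), (g, D, {0,2})] with hbl₁def
    set bl₂ : List (ℕ × Finset ℕ × Finset ℕ) :=
      [(1, Q, {0}), (1, Q, {1}), (1, Q, {2}), (2, D, {0}), (g, D, {2}),
        (1, D, {1,2}), (g, D, {0,1})] with hbl₂def
    have hbl₁ : ∀ q ∈ bl₁, q.2.1 ⊆ Zb m ∧ q.2.2 ⊆ fr := by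
      intro q hq
      rw [hbl₁def] at hq
      simp only [List.mem_cons, List.not_mem_nil, or_false] at hq
      rcases hq with rfl|rfl|rfl|rfl|rfl|rfl|rfl
      exacts [⟨hQsub, show ({0} : Finset ℕ) ⊆ fr by decide⟩,
        ⟨hQsub, show ({1} : Finset ℕ) ⊆ fr by decide⟩,
        ⟨hQsub, show ({2} : Finset ℕ) ⊆ fr by decide⟩,
        ⟨hDsub, show ({0} : Finset ℕ) ⊆ fr by decide⟩,
        ⟨hDsub, show ({1} : Finset ℕ) ⊆ fr by decide⟩,
        ⟨hDsub, show ({1,2} : Finset ℕ) ⊆ fr by decide⟩,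
        ⟨hDsub, show ({0,2} : Finset ℕ) ⊆ fr by decide⟩]
    have hbl₂ : ∀ q ∈ bl₂, q.2.1 ⊆ Zb m ∧ q.2.2 ⊆ fr := by
      intro q hq
      rw [hbl₂def] at hq
      simp only [List.mem_cons, List.not_mem_nil, or_false] at hq
      rcases hq with rfl|rfl|rfl|rfl|rfl|rfl|rfl
      exacts [⟨hQsub, show ({0} : Finset ℕ) ⊆ fr by decide⟩,
        ⟨hQsub, show ({1} : Finset ℕ) ⊆ fr by decide⟩,
        ⟨hQsub, show ({2} : Finset ℕ) ⊆ fr by decide⟩,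
        ⟨hDsub, show ({0} : Finset ℕ) ⊆ fr by decide⟩,
        ⟨hDsub, show ({2} : Finset ℕ) ⊆ fr by decide⟩,
        ⟨hDsub, show ({1,2} : Finset ℕ) ⊆ fr by decide⟩,
        ⟨hDsub, show ({0,1} : Finset ℕ) ⊆ fr by decide⟩]
    have hs₁ : (bl₁.map fun q => (q.1:ℝ)).sum = 6 + 2 * (g:ℝ) := by
      rw [hbl₁def]
      simp only [List.map_cons, List.map_nil, List.sum_cons, List.sum_nil]
      push_cast
      ring
    have hs₂ : (bl₂.map fun q => (q.1:ℝ)).sum = 6 + 2 * (g:ℝ) := by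
      rw [hbl₂def]
      simp only [List.map_cons, List.map_nil, List.sum_cons, List.sum_nil]
      push_cast
      ring
    obtain ⟨N, hN⟩ := exists_nat_mul_gt
      (r := (2 * (6 + 2 * (g:ℝ))) * ω (m+3)) hwp
    have hss : (0:ℝ) ≤ (6 + 2 * (g:ℝ)) * ω (m+3) :=
      mul_nonneg (by positivity) hω3
    have hN₁ : (bl₁.map fun q => (q.1:ℝ)).sum * ω (m+3) < (N:ℝ) * ω p := by
      rw [hs₁]; linarith
    have hN₂ : (bl₂.map fun q => (q.1:ℝ)).sum * ω (m+3) < (N:ℝ) * ω p := by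
      rw [hs₂]; linarith
    have E1 : ∀ X : Finset ℕ, Gfun ω bl₁ X
        = ω (p - 1 + (X ∩ {0}).card) + ω (p - 1 + (X ∩ {1}).card)
          + ω (p - 1 + (X ∩ {2}).card) + 2 * ω (i₂ + (X ∩ {0}).card)
          + (g:ℝ) * ω (i₂ + (X ∩ {1}).card) + ω (i₂ + (X ∩ {1,2}).card)
          + (g:ℝ) * ω (i₂ + (X ∩ {0,2}).card) := by
      intro X
      rw [hbl₁def]
      simp only [Gfun, List.map_cons, List.map_nil, List.sum_cons, List.sum_nil,
        hQcard, hDcard]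
      push_cast
      ring
    have E2 : ∀ X : Finset ℕ, Gfun ω bl₂ X
        = ω (p - 1 + (X ∩ {0}).card) + ω (p - 1 + (X ∩ {1}).card)
          + ω (p - 1 + (X ∩ {2}).card) + 2 * ω (i₂ + (X ∩ {0}).card)
          + (g:ℝ) * ω (i₂ + (X ∩ {2}).card) + ω (i₂ + (X ∩ {1,2}).card)
          + (g:ℝ) * ω (i₂ + (X ∩ {0,1}).card) := by
      intro X
      rw [hbl₂def]
      simp only [Gfun, List.map_cons, List.map_nil, List.sum_cons, List.sum_nil,
        hQcard, hDcard]
      push_cast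
      ring
    have v1f : Gfun ω bl₁ fr = W + W + W + 2 * u1 + g * u1 + u2 + g * u2 := by
      rw [E1]; norm_num [fr, hωq1, hii1, hii2]
    have v101 : Gfun ω bl₁ {0,1} = W + W + 2 * u1 + g * u1 + u1 + g * u1 := by
      rw [E1]; norm_num [hωq1, hii1, hii2, hp0]
    have v102 : Gfun ω bl₁ {0,2} = W + W + 2 * u1 + g * k0 + u1 + g * u2 := by
      rw [E1]; norm_num [hωq1, hii1, hii2, hp0, hk0]
    have v112 : Gfun ω bl₁ {1,2} = W + W + 2 * k0 + g * u1 + u2 + g * u1 := by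
      rw [E1]; norm_num [hωq1, hii1, hii2, hp0, hk0]
    have v10 : Gfun ω bl₁ {0} = W + 2 * u1 + g * k0 + k0 + g * u1 := by
      rw [E1]; norm_num [hωq1, hii1, hii2, hp0, hk0]
    have v11 : Gfun ω bl₁ {1} = W + 2 * k0 + g * u1 + u1 + g * k0 := by
      rw [E1]; norm_num [hωq1, hii1, hii2, hp0, hk0]
    have v2f : Gfun ω bl₂ fr = W + W + W + 2 * u1 + g * u1 + u2 + g * u2 := by
      rw [E2]; norm_num [fr, hωq1, hii1, hii2]
    have v201 : Gfun ω bl₂ {0,1} = W + W + 2 * u1 + g * k0 + u1 + g * u2 := by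
      rw [E2]; norm_num [hωq1, hii1, hii2, hp0, hk0]
    have v202 : Gfun ω bl₂ {0,2} = W + W + 2 * u1 + g * u1 + u1 + g * u1 := by
      rw [E2]; norm_num [hωq1, hii1, hii2, hp0, hk0]
    have v212 : Gfun ω bl₂ {1,2} = W + W + 2 * k0 + g * u1 + u2 + g * u1 := by
      rw [E2]; norm_num [hωq1, hii1, hii2, hp0, hk0]
    have v20 : Gfun ω bl₂ {0} = W + 2 * u1 + g * k0 + k0 + g * u1 := by
      rw [E2]; norm_num [hωq1, hii1, hii2, hp0, hk0]
    have v22 : Gfun ω bl₂ {2} = W + 2 * k0 + g * u1 + u1 + g * k0 := by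
      rw [E2]; norm_num [hωq1, hii1, hii2, hp0, hk0]
    have he0 : fr.erase 0 = ({1,2} : Finset ℕ) := by decide
    have he1 : fr.erase 1 = ({0,2} : Finset ℕ) := by decide
    have he2 : fr.erase 2 = ({0,1} : Finset ℕ) := by decide
    refine construction ω hmono h0 t ht m p N hp1 hpm hwp hp0 bl₁ bl₂ hbl₁ hbl₂ hN₁ hN₂
      ?_ ?_ ?_ ?_ ?_ ?_ ?_ ?_ ?_ ?_
    · intro c hcf
      rcases mem_fr.mp hcf with rfl | rfl | rfl
      · rw [he0, v112, v1f]; linarith [hg, hg1, hg2, hd1pos, hc, hd10, hd20, hk00, hwp]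
      · rw [he1, v102, v1f]; linarith [hg, hg1, hg2, hd1pos, hc, hd10, hd20, hk00, hwp]
      · rw [he2, v101, v1f]; linarith [hg, hg1, hg2, hd1pos, hc, hd10, hd20, hk00, hwp]
    · intro c hcf
      rcases mem_fr.mp hcf with rfl | rfl | rfl
      · rw [he0, v212, v2f]; linarith [hg, hg1, hg2, hd1pos, hc, hd10, hd20, hk00, hwp]
      · rw [he1, v202, v2f]; linarith [hg, hg1, hg2, hd1pos, hc, hd10, hd20, hk00, hwp]
      · rw [he2, v201, v2f]; linarith [hg, hg1, hg2, hd1pos, hc, hd10, hd20, hk00, hwp]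
    · rw [v102, v101]; linarith [hg, hg1, hg2, hd1pos, hc, hd10, hd20, hk00, hwp]
    · rw [v112, v101]; linarith [hg, hg1, hg2, hd1pos, hc, hd10, hd20, hk00, hwp]
    · rw [v11, v10]; linarith [hg, hg1, hg2, hd1pos, hc, hd10, hd20, hk00, hwp]
    · rw [v201, v202]; linarith [hg, hg1, hg2, hd1pos, hc, hd10, hd20, hk00, hwp]
    · rw [v212, v202]; linarith [hg, hg1, hg2, hd1pos, hc, hd10, hd20, hk00, hwp]
    · rw [v22, v20]; linarith [hg, hg1, hg2, hd1pos, hc, hd10, hd20, hk00, hwp]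
    · rw [v101, v201, v112, v212]; linarith [hg, hg1, hg2, hd1pos, hc, hd10, hd20, hk00, hwp]
    · rw [v102, v202, v112, v212]; linarith [hg, hg1, hg2, hd1pos, hc, hd10, hd20, hk00, hwp]

end MSNC


/-- Let `t ≥ 2` and let `𝓡` be the `t`-stage ω-Thiele rule,
where the single-stage ω-Thiele rule satisfies Consistency and
`ω(i₀−1) − ω(i₀−2) ≠ ω(i₀) − ω(i₀−1)` for some integer `i₀ ≥ 2`.  Then `𝓡` does
not satisfy Consistency. -/
theorem multistage_thiele_not_consistent
    (t : ℕ) (ht : 2 ≤ t) (ω : ℕ → ℝ)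
    (hmono : Monotone ω) (h0 : ω 0 = 0)
    (hcons : ThieleConsistent ω)
    (hi : ∃ i₀ : ℕ, 2 ≤ i₀ ∧ ω (i₀ - 1) - ω (i₀ - 2) ≠ ω i₀ - ω (i₀ - 1)) :
    ¬ MSThieleConsistent ω t :=
  MSNC.main t ht ω hmono h0 hi
end

section
/- Let t ≥ 2 and let 𝓡 be the t-stage ω-Thiele rule. If there exists an integer i_0 ≥ 2 such that ω(i_0−1) − ω(i_0−2) > ω(i_0) − ω(i_0−1), then 𝓡 does not satisfy Pareto Efficiency: there exist an election E = (C,V) and a stage vector v⃗ such that some committee in 𝓡(E, v⃗) is dominated by another size-k_t committee. -/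
/-- `S₁` dominates `S₂`: every voter has at least as many approved candidates in
`S₁` as in `S₂`, and some voter has strictly more. -/
def Dominates {α : Type} [DecidableEq α] (V : List (Finset α)) (S₁ S₂ : Finset α) : Prop :=
  (∀ A ∈ V, (S₂ ∩ A).card ≤ (S₁ ∩ A).card) ∧ ∃ A ∈ V, (S₂ ∩ A).card < (S₁ ∩ A).card


/-- stage vector: `[i₀+n-1, ..., i₀+1, i₀]`. -/
def kseq (i₀ : ℕ) : ℕ → List ℕ
  | 0 => []
  | n+1 => (i₀ + n) :: kseq i₀ n

lemma kseq_length (i₀ n : ℕ) : (kseq i₀ n).length = n := by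
  induction n with
  | zero => rfl
  | succ n ih => simp [kseq, ih]

lemma kseq_ne_nil (i₀ n : ℕ) (h : n ≠ 0) : kseq i₀ n ≠ [] := by
  cases n with
  | zero => omega
  | succ n => simp [kseq]

lemma kseq_chain (i₀ n : ℕ) : List.Chain (· > ·) (i₀ + n) (kseq i₀ n) := by
  induction n with
  | zero => exact List.Chain.nil
  | succ n ih => exact List.Chain.cons (by omega) ih

lemma kseq_mem (i₀ n : ℕ) : ∀ k ∈ kseq i₀ n, i₀ ≤ k := by
  induction n with
  | zero => simp [kseq]
  | succ n ih =>
    intro k hk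
    rcases List.mem_cons.mp hk with h | h
    · omega
    · exact ih k h

lemma kseq_getLast (i₀ n : ℕ) (h : n ≠ 0) (hne : kseq i₀ n ≠ []) :
    (kseq i₀ n).getLast hne = i₀ := by
  induction n with
  | zero => omega
  | succ n ih =>
    cases n with
    | zero => simp [kseq]
    | succ m =>
      have := List.getLast_cons (l := kseq i₀ (m+1)) (a := i₀ + (m+1))
        (kseq_ne_nil i₀ (m+1) (by omega))
      rw [show (kseq i₀ (m+1+1)).getLast hne
            = ((i₀ + (m+1)) :: kseq i₀ (m+1)).getLast (by simp) from rfl, this]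
      exact ih (by omega) _

/-- common candidate pool of the interesting part -/
def myQ (i₀ : ℕ) : Finset ℕ := Finset.range (i₀ + 2)

/-- the electorate: 1 voter `Q\{0,1}`, `M` voters `Q\{0,2}`, `M` voters
`Q\{1,2}`, `M+1` voters `Q\{0,3}`, `M+1` voters `Q\{1,3}`. -/
def myV (i₀ M : ℕ) : List (Finset ℕ) :=
  (myQ i₀ \ {0, 1}) ::
    (List.replicate M (myQ i₀ \ {0, 2}) ++ List.replicate M (myQ i₀ \ {1, 2}) ++
     List.replicate (M+1) (myQ i₀ \ {0, 3}) ++ List.replicate (M+1) (myQ i₀ \ {1, 3}))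

lemma sdiff_inter_sdiff' (s F D : Finset ℕ) : (s \ F) ∩ (s \ D) = s \ (F ∪ D) := by
  ext x; simp; tauto

lemma inter_card (i₀ : ℕ) (F D : Finset ℕ) (h : F ∪ D ⊆ Finset.range (i₀ + 2)) :
    ((Finset.range (i₀+2) \ F) ∩ (Finset.range (i₀+2) \ D)).card = i₀ + 2 - (F ∪ D).card := by
  rw [sdiff_inter_sdiff', Finset.card_sdiff_of_subset h, Finset.card_range]

lemma score_formula (ω : ℕ → ℝ) (i₀ M : ℕ) (hi : 2 ≤ i₀) (F : Finset ℕ)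
    (hF : F ⊆ Finset.range (i₀ + 2)) :
    thieleScore ω (myV i₀ M) (myQ i₀ \ F) =
      ω (i₀ + 2 - (F ∪ {0,1}).card) +
      M * ω (i₀ + 2 - (F ∪ {0,2}).card) + M * ω (i₀ + 2 - (F ∪ {1,2}).card) +
      (M+1) * ω (i₀ + 2 - (F ∪ {0,3}).card) + (M+1) * ω (i₀ + 2 - (F ∪ {1,3}).card) := by
  have hsub : ∀ D : Finset ℕ, (∀ x ∈ D, x < 4) → F ∪ D ⊆ Finset.range (i₀ + 2) := by
    intro D hD x hx
    rcases Finset.mem_union.mp hx with h | h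
    · exact hF h
    · simp only [Finset.mem_range]; have := hD x h; omega
  simp only [thieleScore, myV, myQ, List.map_cons, List.map_append, List.map_replicate,
    List.sum_cons, List.sum_append, List.sum_replicate, smul_eq_mul, nsmul_eq_mul]
  rw [inter_card i₀ F {0,1} (hsub _ (by decide)), inter_card i₀ F {0,2} (hsub _ (by decide)),
    inter_card i₀ F {1,2} (hsub _ (by decide)), inter_card i₀ F {0,3} (hsub _ (by decide)),
    inter_card i₀ F {1,3} (hsub _ (by decide))]
  push_cast
  ring

lemma winner_of_superset {α : Type} [DecidableEq α] (ω : ℕ → ℝ) (hmono : Monotone ω)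
    (C : Finset α) (V : List (Finset α)) (S : Finset α) (k : ℕ)
    (hS : S ⊆ C) (hcard : S.card = k) (hcov : ∀ A ∈ V, A ⊆ S) :
    S ∈ thieleWinners ω C V k := by
  refine ⟨hS, hcard, ?_⟩
  intro T _ _
  apply List.sum_le_sum
  intro A hA
  apply hmono
  calc (T ∩ A).card ≤ A.card := Finset.card_le_card Finset.inter_subset_right
    _ = (S ∩ A).card := by rw [Finset.inter_eq_right.mpr (hcov A hA)]

lemma exists_sdiff {T P : Finset ℕ} (hT : T ⊆ P) (h : T.card + 1 = P.card) :
    ∃ c ∈ P, T = P \ {c} := by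
  have h1 : (P \ T).card = 1 := by rw [Finset.card_sdiff_of_subset hT]; omega
  obtain ⟨c, hc⟩ := Finset.card_eq_one.mp h1
  have hcP : c ∈ P \ T := hc ▸ Finset.mem_singleton_self c
  refine ⟨c, (Finset.mem_sdiff.mp hcP).1, ?_⟩
  ext x
  simp only [Finset.mem_sdiff, Finset.mem_singleton]
  constructor
  · intro hx
    refine ⟨hT hx, fun hxc => ?_⟩
    exact (Finset.mem_sdiff.mp hcP).2 (hxc ▸ hx)
  · rintro ⟨hxP, hxc⟩
    by_contra hxT
    have : x ∈ P \ T := Finset.mem_sdiff.mpr ⟨hxP, hxT⟩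
    rw [hc, Finset.mem_singleton] at this
    exact hxc this

lemma card_union_singleton (c : ℕ) (D : Finset ℕ) (h : c ∉ D) :
    ({c} ∪ D).card = D.card + 1 := by
  rw [show ({c} ∪ D : Finset ℕ) = insert c D by ext x; simp, Finset.card_insert_of_notMem h]

section Keys

variable (ω : ℕ → ℝ) (i₀ M : ℕ)

lemma mem_myQ {i₀ : ℕ} (hi : 2 ≤ i₀) {x : ℕ} (hx : x < 4) : x ∈ myQ i₀ := by
  simp only [myQ, Finset.mem_range]; omega

lemma key1 (hmono : Monotone ω) (hi : 2 ≤ i₀)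
    (hM : (ω (i₀-1) - ω (i₀-2)) + (ω i₀ - ω (i₀-1)) ≤
      (M : ℝ) * ((ω (i₀-1) - ω (i₀-2)) - (ω i₀ - ω (i₀-1)))) :
    myQ i₀ \ {3} ∈ thieleWinners ω (myQ i₀) (myV i₀ M) (i₀ + 1) := by
  have h3Q : ({3} : Finset ℕ) ⊆ myQ i₀ := by
    intro x hx; simp only [Finset.mem_singleton] at hx; exact hx ▸ mem_myQ hi (by omega)
  have hcard3 : (myQ i₀ \ {3}).card = i₀ + 1 := by
    rw [Finset.card_sdiff_of_subset h3Q]; simp [myQ]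
  refine ⟨Finset.sdiff_subset, hcard3, ?_⟩
  intro T hT hTcard
  have hQcard : (myQ i₀).card = i₀ + 2 := by simp [myQ]
  obtain ⟨c, hcQ, rfl⟩ := exists_sdiff hT (by omega)
  have hcQ' : c < i₀ + 2 := by simpa [myQ] using hcQ
  have hsub : ∀ c' : ℕ, c' < i₀ + 2 → ({c'} : Finset ℕ) ⊆ Finset.range (i₀ + 2) := by
    intro c' hc' x hx; simp only [Finset.mem_singleton] at hx; simp [Finset.mem_range]; omega
  rw [score_formula ω i₀ M hi {c} (hsub c hcQ'), score_formula ω i₀ M hi {3} (hsub 3 (by omega))]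
  have e0 : i₀ + 2 - 2 = i₀ := by omega
  have e1 : i₀ + 2 - 3 = i₀ - 1 := by omega
  have h12 : ω (i₀ - 1) ≤ ω i₀ := hmono (by omega)
  have h01 : ω (i₀ - 2) ≤ ω (i₀ - 1) := hmono (by omega)
  have hM0 : (0:ℝ) ≤ (M:ℝ) := Nat.cast_nonneg M
  rw [show (({3} ∪ {0,1} : Finset ℕ)).card = 3 from by decide,
      show (({3} ∪ {0,2} : Finset ℕ)).card = 3 from by decide,
      show (({3} ∪ {1,2} : Finset ℕ)).card = 3 from by decide,
      show (({3} ∪ {0,3} : Finset ℕ)).card = 2 from by decide,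
      show (({3} ∪ {1,3} : Finset ℕ)).card = 2 from by decide, e0, e1]
  have hc4 : c = 0 ∨ c = 1 ∨ c = 2 ∨ c = 3 ∨ 4 ≤ c := by omega
  rcases hc4 with rfl | rfl | rfl | rfl | hc4
  · rw [show (({0} ∪ {0,1} : Finset ℕ)).card = 2 from by decide,
        show (({0} ∪ {0,2} : Finset ℕ)).card = 2 from by decide,
        show (({0} ∪ {1,2} : Finset ℕ)).card = 3 from by decide,
        show (({0} ∪ {0,3} : Finset ℕ)).card = 2 from by decide,
        show (({0} ∪ {1,3} : Finset ℕ)).card = 3 from by decide, e0, e1]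
    nlinarith
  · rw [show (({1} ∪ {0,1} : Finset ℕ)).card = 2 from by decide,
        show (({1} ∪ {0,2} : Finset ℕ)).card = 3 from by decide,
        show (({1} ∪ {1,2} : Finset ℕ)).card = 2 from by decide,
        show (({1} ∪ {0,3} : Finset ℕ)).card = 3 from by decide,
        show (({1} ∪ {1,3} : Finset ℕ)).card = 2 from by decide, e0, e1]
    nlinarith
  · rw [show (({2} ∪ {0,1} : Finset ℕ)).card = 3 from by decide,
        show (({2} ∪ {0,2} : Finset ℕ)).card = 2 from by decide,
        show (({2} ∪ {1,2} : Finset ℕ)).card = 2 from by decide,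
        show (({2} ∪ {0,3} : Finset ℕ)).card = 3 from by decide,
        show (({2} ∪ {1,3} : Finset ℕ)).card = 3 from by decide, e0, e1]
    nlinarith
  · exact le_refl _
  · rw [card_union_singleton c {0,1} (by simp; omega),
        card_union_singleton c {0,2} (by simp; omega),
        card_union_singleton c {1,2} (by simp; omega),
        card_union_singleton c {0,3} (by simp; omega),
        card_union_singleton c {1,3} (by simp; omega)]
    norm_num [e1]
    nlinarith

lemma key2 (hmono : Monotone ω) (hi : 2 ≤ i₀)
    (hM : (ω (i₀-1) - ω (i₀-2)) + (ω i₀ - ω (i₀-1)) ≤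
      (M : ℝ) * ((ω (i₀-1) - ω (i₀-2)) - (ω i₀ - ω (i₀-1)))) :
    myQ i₀ \ {2,3} ∈ thieleWinners ω (myQ i₀ \ {3}) (myV i₀ M) i₀ := by
  have h23Q : ({2,3} : Finset ℕ) ⊆ myQ i₀ := by
    intro x hx; simp only [Finset.mem_insert, Finset.mem_singleton] at hx
    rcases hx with rfl | rfl <;> exact mem_myQ hi (by omega)
  have hcardS : (myQ i₀ \ {2,3}).card = i₀ := by
    rw [Finset.card_sdiff_of_subset h23Q]; simp [myQ]
  have hsubS : myQ i₀ \ {2,3} ⊆ myQ i₀ \ {3} := by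
    intro x hx; simp only [Finset.mem_sdiff, Finset.mem_insert, Finset.mem_singleton] at *
    tauto
  refine ⟨hsubS, hcardS, ?_⟩
  intro T hT hTcard
  have h3Q : ({3} : Finset ℕ) ⊆ myQ i₀ := by
    intro x hx
    simp only [Finset.mem_singleton] at hx
    exact hx ▸ mem_myQ hi (by omega)
  have hRcard : (myQ i₀ \ {3}).card = i₀ + 1 := by
    rw [Finset.card_sdiff_of_subset h3Q]; simp [myQ]
  obtain ⟨c, hcR, rfl⟩ := exists_sdiff hT (by omega)
  have hcQ : c < i₀ + 2 ∧ c ≠ 3 := by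
    simp only [Finset.mem_sdiff, Finset.mem_singleton, myQ, Finset.mem_range] at hcR
    exact hcR
  have hre : (myQ i₀ \ {3}) \ {c} = myQ i₀ \ (({3} : Finset ℕ) ∪ {c}) := by
    ext x; simp only [Finset.mem_sdiff, Finset.mem_union, Finset.mem_singleton]; tauto
  rw [hre]
  have hsub : ({3} ∪ {c} : Finset ℕ) ⊆ Finset.range (i₀ + 2) := by
    intro x hx; simp only [Finset.mem_union, Finset.mem_singleton] at hx
    simp only [Finset.mem_range]; omega
  have hsub' : ({2,3} : Finset ℕ) ⊆ Finset.range (i₀ + 2) := by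
    intro x hx; simp only [Finset.mem_insert, Finset.mem_singleton] at hx
    simp only [Finset.mem_range]; omega
  rw [score_formula ω i₀ M hi ({3} ∪ {c}) hsub, score_formula ω i₀ M hi {2,3} hsub']
  have e0 : i₀ + 2 - 2 = i₀ := by omega
  have e1 : i₀ + 2 - 3 = i₀ - 1 := by omega
  have e2 : i₀ + 2 - 4 = i₀ - 2 := by omega
  have h12 : ω (i₀ - 1) ≤ ω i₀ := hmono (by omega)
  have h01 : ω (i₀ - 2) ≤ ω (i₀ - 1) := hmono (by omega)
  have hM0 : (0:ℝ) ≤ (M:ℝ) := Nat.cast_nonneg M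
  rw [show (({2,3} ∪ {0,1} : Finset ℕ)).card = 4 from by decide,
      show (({2,3} ∪ {0,2} : Finset ℕ)).card = 3 from by decide,
      show (({2,3} ∪ {1,2} : Finset ℕ)).card = 3 from by decide,
      show (({2,3} ∪ {0,3} : Finset ℕ)).card = 3 from by decide,
      show (({2,3} ∪ {1,3} : Finset ℕ)).card = 3 from by decide]
  simp only [e0, e1, e2]
  have hc4 : c = 0 ∨ c = 1 ∨ c = 2 ∨ 4 ≤ c := by omega
  rcases hc4 with rfl | rfl | rfl | hc4
  · rw [show (({3} ∪ {0} ∪ {0,1} : Finset ℕ)).card = 3 from by decide,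
        show (({3} ∪ {0} ∪ {0,2} : Finset ℕ)).card = 3 from by decide,
        show (({3} ∪ {0} ∪ {1,2} : Finset ℕ)).card = 4 from by decide,
        show (({3} ∪ {0} ∪ {0,3} : Finset ℕ)).card = 2 from by decide,
        show (({3} ∪ {0} ∪ {1,3} : Finset ℕ)).card = 3 from by decide]
    simp only [e0, e1, e2]
    ring_nf
    ring_nf at hM
    linarith
  · rw [show (({3} ∪ {1} ∪ {0,1} : Finset ℕ)).card = 3 from by decide,
        show (({3} ∪ {1} ∪ {0,2} : Finset ℕ)).card = 4 from by decide,
        show (({3} ∪ {1} ∪ {1,2} : Finset ℕ)).card = 3 from by decide,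
        show (({3} ∪ {1} ∪ {0,3} : Finset ℕ)).card = 3 from by decide,
        show (({3} ∪ {1} ∪ {1,3} : Finset ℕ)).card = 2 from by decide]
    simp only [e0, e1, e2]
    ring_nf
    ring_nf at hM
    linarith
  · rw [show (({3} ∪ {2} ∪ {0,1} : Finset ℕ)).card = 4 from by decide,
        show (({3} ∪ {2} ∪ {0,2} : Finset ℕ)).card = 3 from by decide,
        show (({3} ∪ {2} ∪ {1,2} : Finset ℕ)).card = 3 from by decide,
        show (({3} ∪ {2} ∪ {0,3} : Finset ℕ)).card = 3 from by decide,
        show (({3} ∪ {2} ∪ {1,3} : Finset ℕ)).card = 3 from by decide]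
    simp only [e0, e1, e2]
    exact le_refl _
  · have hcu : ∀ D : Finset ℕ, (∀ x ∈ D, x < 4) → ({3} ∪ {c} ∪ D : Finset ℕ) = {c} ∪ ({3} ∪ D) := by
      intro D _; ext x
      simp only [Finset.mem_union, Finset.mem_singleton]; tauto
    rw [hcu {0,1} (by decide), hcu {0,2} (by decide), hcu {1,2} (by decide),
        hcu {0,3} (by decide), hcu {1,3} (by decide),
        card_union_singleton c ({3} ∪ {0,1}) (by simp; omega),
        card_union_singleton c ({3} ∪ {0,2}) (by simp; omega),
        card_union_singleton c ({3} ∪ {1,2}) (by simp; omega),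
        card_union_singleton c ({3} ∪ {0,3}) (by simp; omega),
        card_union_singleton c ({3} ∪ {1,3}) (by simp; omega),
        show (({3} ∪ {0,1} : Finset ℕ)).card = 3 from by decide,
        show (({3} ∪ {0,2} : Finset ℕ)).card = 3 from by decide,
        show (({3} ∪ {1,2} : Finset ℕ)).card = 3 from by decide,
        show (({3} ∪ {0,3} : Finset ℕ)).card = 2 from by decide,
        show (({3} ∪ {1,3} : Finset ℕ)).card = 2 from by decide]
    norm_num [e1, e2]
    nlinarith

end Keys

lemma myV_subset (i₀ M : ℕ) : ∀ A ∈ myV i₀ M, A ⊆ myQ i₀ := by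
  intro A hA
  simp only [myV, List.mem_cons, List.mem_append, List.mem_replicate] at hA
  rcases hA with rfl | ⟨⟨⟨⟨_, rfl⟩ | ⟨_, rfl⟩⟩ | ⟨_, rfl⟩⟩ | ⟨_, rfl⟩⟩ <;>
    exact Finset.sdiff_subset

lemma ms_all (ω : ℕ → ℝ) (i₀ M : ℕ) (hmono : Monotone ω) (hi : 2 ≤ i₀)
    (hM : (ω (i₀-1) - ω (i₀-2)) + (ω i₀ - ω (i₀-1)) ≤
      (M : ℝ) * ((ω (i₀-1) - ω (i₀-2)) - (ω i₀ - ω (i₀-1)))) :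
    ∀ n, 2 ≤ n →
      (myQ i₀ \ {2,3}) ∈ msThiele ω (kseq i₀ n) (Finset.range (i₀ + n)) (myV i₀ M) := by
  intro n
  induction n with
  | zero => omega
  | succ n ih =>
    intro hn
    rcases Nat.lt_or_ge n 2 with hn2 | hn2
    · -- n + 1 = 2
      have hn1 : n = 1 := by omega
      subst hn1
      show (myQ i₀ \ {2,3}) ∈ msThiele ω ((i₀+1) :: (i₀+0) :: []) (Finset.range (i₀ + 2)) (myV i₀ M)
      refine ⟨myQ i₀ \ {3}, key1 ω i₀ M hmono hi hM, ?_⟩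
      refine ⟨myQ i₀ \ {2,3}, ?_, rfl⟩
      have := key2 ω i₀ M hmono hi hM
      simpa using this
    · -- induction step
      refine ⟨Finset.range (i₀ + n), ?_, ih hn2⟩
      apply winner_of_superset ω hmono _ _ _ _ ?_ (Finset.card_range _) ?_
      · exact Finset.range_subset_range.mpr (by omega)
      · intro A hA
        exact (myV_subset i₀ M A hA).trans (Finset.range_subset_range.mpr (by omega))

/-- Let `t ≥ 2` and let `𝓡` be the `t`-stage ω-Thiele rule
(ω nondecreasing, `ω(0) = 0`).  If `ω(i₀−1) − ω(i₀−2) > ω(i₀) − ω(i₀−1)` for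
some integer `i₀ ≥ 2`, then `𝓡` does not satisfy Pareto Efficiency: there exist
an election `E = (C,V)` and a stage vector `ks` such that some committee in
`𝓡(E, ks)` is dominated by another size-`k_t` committee. -/
theorem multistage_thiele_not_pareto_efficient
    (t : ℕ) (ht : 2 ≤ t) (ω : ℕ → ℝ)
    (hmono : Monotone ω) (h0 : ω 0 = 0)
    (hi : ∃ i₀ : ℕ, 2 ≤ i₀ ∧ ω i₀ - ω (i₀ - 1) < ω (i₀ - 1) - ω (i₀ - 2)) :
    ∃ (C : Finset ℕ) (V : List (Finset ℕ)) (ks : List ℕ) (hks : ks ≠ []),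
      (∀ A ∈ V, A ⊆ C) ∧ ks.length = t ∧
      List.Chain (· > ·) C.card ks ∧ (∀ k ∈ ks, 1 ≤ k) ∧
      ∃ S ∈ msThiele ω ks C V,
        ∃ T, T ⊆ C ∧ T.card = ks.getLast hks ∧ Dominates V T S := by
  obtain ⟨i₀, hi2, hlt⟩ := hi
  obtain ⟨M, hM⟩ := Archimedean.arch
    ((ω (i₀-1) - ω (i₀-2)) + (ω i₀ - ω (i₀-1)))
    (show (0:ℝ) < (ω (i₀-1) - ω (i₀-2)) - (ω i₀ - ω (i₀-1)) by linarith)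
  rw [nsmul_eq_mul] at hM
  have hQC : myQ i₀ ⊆ Finset.range (i₀ + t) := by
    simp only [myQ]; exact Finset.range_subset_range.mpr (by omega)
  refine ⟨Finset.range (i₀ + t), myV i₀ M, kseq i₀ t, kseq_ne_nil i₀ t (by omega),
    ?_, kseq_length i₀ t, ?_, ?_, ?_⟩
  · intro A hA; exact (myV_subset i₀ M A hA).trans hQC
  · rw [Finset.card_range]; exact kseq_chain i₀ t
  · intro k hk; have := kseq_mem i₀ t k hk; omega
  · refine ⟨myQ i₀ \ {2,3}, ms_all ω i₀ M hmono hi2 hM t ht, myQ i₀ \ {0,1}, ?_, ?_, ?_⟩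
    · exact Finset.sdiff_subset.trans hQC
    · rw [kseq_getLast i₀ t (by omega), Finset.card_sdiff_of_subset (by
        intro x hx; simp only [Finset.mem_insert, Finset.mem_singleton] at hx
        rcases hx with rfl | rfl <;> exact mem_myQ hi2 (by omega))]
      simp [myQ]
    · constructor
      · intro A hA
        simp only [myV, List.mem_cons, List.mem_append, List.mem_replicate] at hA
        have key : ∀ D : Finset ℕ, ({2,3} ∪ D : Finset ℕ) ⊆ Finset.range (i₀+2) →
            ({0,1} ∪ D : Finset ℕ) ⊆ Finset.range (i₀+2) →
            ({0,1} ∪ D).card ≤ ({2,3} ∪ D).card →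
            ((myQ i₀ \ {2,3}) ∩ (myQ i₀ \ D)).card ≤ ((myQ i₀ \ {0,1}) ∩ (myQ i₀ \ D)).card := by
          intro D h1 h2 h3
          simp only [myQ]
          rw [inter_card i₀ _ _ h1, inter_card i₀ _ _ h2]
          omega
        have hmem : ∀ x : ℕ, x < 4 → x ∈ Finset.range (i₀ + 2) := by
          intro x hx; simp only [Finset.mem_range]; omega
        have hsub4 : ∀ D : Finset ℕ, (∀ x ∈ D, x < 4) → ∀ E : Finset ℕ, (∀ x ∈ E, x < 4) →
            (E ∪ D : Finset ℕ) ⊆ Finset.range (i₀+2) := by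
          intro D hD E hE x hx
          rcases Finset.mem_union.mp hx with h | h
          · exact hmem x (hE x h)
          · exact hmem x (hD x h)
        rcases hA with rfl | ⟨⟨⟨⟨_, rfl⟩ | ⟨_, rfl⟩⟩ | ⟨_, rfl⟩⟩ | ⟨_, rfl⟩⟩
        · exact key {0,1} (hsub4 _ (by decide) _ (by decide)) (hsub4 _ (by decide) _ (by decide))
            (by decide)
        · exact key {0,2} (hsub4 _ (by decide) _ (by decide)) (hsub4 _ (by decide) _ (by decide))
            (by decide)
        · exact key {1,2} (hsub4 _ (by decide) _ (by decide)) (hsub4 _ (by decide) _ (by decide))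
            (by decide)
        · exact key {0,3} (hsub4 _ (by decide) _ (by decide)) (hsub4 _ (by decide) _ (by decide))
            (by decide)
        · exact key {1,3} (hsub4 _ (by decide) _ (by decide)) (hsub4 _ (by decide) _ (by decide))
            (by decide)
      · refine ⟨myQ i₀ \ {0,1}, List.mem_cons_self, ?_⟩
        have hmem : ∀ x : ℕ, x < 4 → x ∈ Finset.range (i₀ + 2) := by
          intro x hx; simp only [Finset.mem_range]; omega
        have h1 : (({2,3} ∪ {0,1} : Finset ℕ)) ⊆ Finset.range (i₀+2) := by
          intro x hx
          simp only [Finset.mem_union, Finset.mem_insert, Finset.mem_singleton] at hx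
          apply hmem; omega
        have h2 : (({0,1} ∪ {0,1} : Finset ℕ)) ⊆ Finset.range (i₀+2) := by
          intro x hx
          simp only [Finset.mem_union, Finset.mem_insert, Finset.mem_singleton] at hx
          apply hmem; omega
        simp only [myQ]
        rw [inter_card i₀ {2,3} {0,1} h1, inter_card i₀ {0,1} {0,1} h2,
            show (({2,3} ∪ {0,1} : Finset ℕ)).card = 4 from by decide,
            show (({0,1} ∪ {0,1} : Finset ℕ)).card = 2 from by decide]
        omega
end

section
/- For every t ≥ 2, the t-stage Proportional Approval Voting rule (the multi-stage ω-Thiele rule with ω(x) = Σ_{j=1}^x 1/j) does not satisfy Pareto Efficiency: there exist an election E = (C,V) and a stage vector v⃗ such that some winning committee is dominated by another committee of the same size. -/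
/-- The PAV weight function `ω(x) = Σ_{j=1}^x 1/j`. -/
noncomputable def pav (x : ℕ) : ℝ := ∑ j ∈ Finset.range x, (1 : ℝ) / (j + 1)

/-! ### Auxiliary material for the counterexample -/

/-- The fixed list of voters of the counterexample. -/
def V0 : List (Finset ℕ) := [{0,1}, {0,1}, {0,2}, {1,3}, {2,3}, {0,2,3}]

lemma pav_zero : pav 0 = 0 := by simp [pav]

lemma pav_one : pav 1 = 1 := by simp [pav]

lemma pav_two : pav 2 = 3/2 := by
  simp [pav, Finset.sum_range_succ]; norm_num

lemma pav_three : pav 3 = 11/6 := by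
  simp [pav, Finset.sum_range_succ]; norm_num

lemma pav_mono : Monotone pav := by
  intro a b h
  exact Finset.sum_le_sum_of_subset_of_nonneg (Finset.range_subset_range.mpr h)
    (by intro i _ _; positivity)

lemma score_val (S : Finset ℕ) (c1 c2 c3 c4 c5 : ℕ)
    (h1 : (S ∩ {0,1}).card = c1) (h2 : (S ∩ {0,2}).card = c2)
    (h3 : (S ∩ {1,3}).card = c3) (h4 : (S ∩ {2,3}).card = c4)
    (h5 : (S ∩ {0,2,3}).card = c5) :
    thieleScore pav V0 S = 2 * pav c1 + pav c2 + pav c3 + pav c4 + pav c5 := by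
  simp [thieleScore, V0, h1, h2, h3, h4, h5]; ring

lemma subsets3 (T : Finset ℕ) (hT : T ⊆ Finset.range 4) (hc : T.card = 3) :
    T = {0,1,2} ∨ T = {0,1,3} ∨ T = {0,2,3} ∨ T = {1,2,3} := by
  have h : ∀ T ∈ (Finset.range 4).powerset, T.card = 3 →
      (T = {0,1,2} ∨ T = {0,1,3} ∨ T = {0,2,3} ∨ T = {1,2,3}) := by decide
  exact h T (Finset.mem_powerset.mpr hT) hc

lemma subsets2 (T : Finset ℕ) (hT : T ⊆ ({0,1,2} : Finset ℕ)) (hc : T.card = 2) :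
    T = {0,1} ∨ T = {0,2} ∨ T = {1,2} := by
  have h : ∀ T ∈ ({0,1,2} : Finset ℕ).powerset, T.card = 2 →
      (T = {0,1} ∨ T = {0,2} ∨ T = {1,2}) := by decide
  exact h T (Finset.mem_powerset.mpr hT) hc

lemma score_012 : thieleScore pav V0 {0,1,2} = 8 := by
  rw [score_val _ 2 2 1 1 2 (by decide) (by decide) (by decide) (by decide) (by decide),
    pav_one, pav_two]; norm_num

lemma score_013 : thieleScore pav V0 {0,1,3} = 8 := by
  rw [score_val _ 2 1 2 1 2 (by decide) (by decide) (by decide) (by decide) (by decide),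
    pav_one, pav_two]; norm_num

lemma score_023 : thieleScore pav V0 {0,2,3} = 47/6 := by
  rw [score_val _ 1 2 1 2 3 (by decide) (by decide) (by decide) (by decide) (by decide),
    pav_one, pav_two, pav_three]; norm_num

lemma score_123 : thieleScore pav V0 {1,2,3} = 15/2 := by
  rw [score_val _ 1 1 2 2 2 (by decide) (by decide) (by decide) (by decide) (by decide),
    pav_one, pav_two]; norm_num

lemma score_01 : thieleScore pav V0 {0,1} = 6 := by
  rw [score_val _ 2 1 1 0 1 (by decide) (by decide) (by decide) (by decide) (by decide),
    pav_zero, pav_one, pav_two]; norm_num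

lemma score_02 : thieleScore pav V0 {0,2} = 6 := by
  rw [score_val _ 1 2 0 1 2 (by decide) (by decide) (by decide) (by decide) (by decide),
    pav_zero, pav_one, pav_two]; norm_num

lemma score_12 : thieleScore pav V0 {1,2} = 6 := by
  rw [score_val _ 1 1 1 1 1 (by decide) (by decide) (by decide) (by decide) (by decide),
    pav_one]; norm_num

/-- Stage 1 of the core example: `{0,1,2}` is a PAV winner of size 3 on the pool
`{0,1,2,3}`. -/
lemma stage1 : ({0,1,2} : Finset ℕ) ∈ thieleWinners pav (Finset.range 4) V0 3 := by
  refine ⟨by decide, by decide, ?_⟩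
  intro T hT hc
  rcases subsets3 T hT hc with rfl | rfl | rfl | rfl <;>
    rw [score_012] <;>
    first
      | rw [score_013]
      | rw [score_023]; norm_num
      | rw [score_123]; norm_num

/-- Stage 2 of the core example: `{1,2}` is a PAV winner of size 2 on the pool
`{0,1,2}`. -/
lemma stage2 : ({1,2} : Finset ℕ) ∈ thieleWinners pav ({0,1,2} : Finset ℕ) V0 2 := by
  refine ⟨by decide, by decide, ?_⟩
  intro T hT hc
  rcases subsets2 T hT hc with rfl | rfl | rfl <;>
    rw [score_12] <;> first | rw [score_01] | rw [score_02]

lemma ballots_sub : ∀ A ∈ V0, A ⊆ Finset.range 4 := by decide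

/-- Termwise monotonicity of the PAV score. -/
lemma score_mono (V : List (Finset ℕ)) (S T : Finset ℕ)
    (h : ∀ A ∈ V, (T ∩ A).card ≤ (S ∩ A).card) :
    thieleScore pav V T ≤ thieleScore pav V S :=
  List.sum_le_sum (fun A hA => pav_mono (h A hA))

/-- The stage vector `[n+1, n, …, 2]`. -/
def ksFun (n : ℕ) : List ℕ := (List.range n).map (fun i => n + 1 - i)

lemma ksFun_succ (n : ℕ) : ksFun (n + 1) = (n + 2) :: ksFun n := by
  have h : (fun i => n + 1 + 1 - (i + 1)) = (fun i => n + 1 - i) := by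
    funext i; omega
  simp [ksFun, List.range_succ_eq_map, List.map_map, Function.comp_def, h]

lemma ksFun_chain (n : ℕ) : List.Chain (· > ·) (n + 2) (ksFun n) := by
  induction n with
  | zero => exact List.Chain.nil
  | succ m ih => rw [ksFun_succ]; exact List.Chain.cons (by omega) ih

/-- The key induction: with the pool `{0,…,n+1}` and stage vector
`[n+1, n, …, 2]`, the committee `{1,2}` is a multistage PAV winner. -/
lemma key : ∀ n, 2 ≤ n →
    ({1,2} : Finset ℕ) ∈ msThiele pav (ksFun n) (Finset.range (n + 2)) V0 := by
  intro n hn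
  induction n, hn using Nat.le_induction with
  | base =>
    have hks : ksFun 2 = [3, 2] := by decide
    rw [hks]
    have h4 : (Finset.range 4 : Finset ℕ) = Finset.range (2 + 2) := by norm_num
    exact ⟨{0,1,2}, h4 ▸ stage1, {1,2}, stage2, rfl⟩
  | succ m hm ih =>
    rw [ksFun_succ]
    refine ⟨Finset.range (m + 2), ⟨Finset.range_subset_range.mpr (by omega), Finset.card_range _, ?_⟩, ih⟩
    intro T _ _
    refine score_mono _ _ _ (fun A hA => ?_)
    have hA' : A ⊆ Finset.range (m + 2) :=
      (ballots_sub A hA).trans (Finset.range_subset_range.mpr (by omega))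
    rw [Finset.inter_eq_right.mpr hA']
    exact Finset.card_le_card (fun x hx => (Finset.mem_inter.mp hx).2)

/-- For every `t ≥ 2`, the `t`-stage Proportional Approval
Voting rule (the multi-stage ω-Thiele rule with `ω(x) = Σ_{j=1}^x 1/j`) does not
satisfy Pareto Efficiency: there exist an election `E = (C,V)` and a stage
vector `ks` such that some winning committee is dominated by another committee
of the same size. -/
theorem multistage_pav_not_pareto_efficient (t : ℕ) (ht : 2 ≤ t) :
    ∃ (C : Finset ℕ) (V : List (Finset ℕ)) (ks : List ℕ), ks ≠ [] ∧
      (∀ A ∈ V, A ⊆ C) ∧ ks.length = t ∧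
      List.Chain (· > ·) C.card ks ∧ (∀ k ∈ ks, 1 ≤ k) ∧
      ∃ S ∈ msThiele pav ks C V,
        ∃ T, T ⊆ C ∧ T.card = S.card ∧ Dominates V T S := by
  refine ⟨Finset.range (t + 2), V0, ksFun t, ?_, ?_, ?_, ?_, ?_, {1,2}, key t ht, {0,3}, ?_, ?_, ?_⟩
  · intro h
    have : (ksFun t).length = 0 := by rw [h]; rfl
    simp [ksFun] at this
    omega
  · intro A hA
    exact (ballots_sub A hA).trans (Finset.range_subset_range.mpr (by omega))
  · simp [ksFun]
  · rw [Finset.card_range]; exact ksFun_chain t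
  · intro k hk
    simp only [ksFun, List.mem_map, List.mem_range] at hk
    obtain ⟨i, hi, rfl⟩ := hk
    omega
  · exact (show ({0,3} : Finset ℕ) ⊆ Finset.range 4 by decide).trans
      (Finset.range_subset_range.mpr (by omega))
  · decide
  · constructor
    · decide
    · exact ⟨{0,2,3}, by decide, by decide⟩
end
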